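/- Key polynomial identity: for a partition λ with n parts, the key polynomial K_λ(x_1,...,x_n), defined as the generating function Σ x^F over coinversion-free fillings of shape λ with key basement w0 = (n,...,1) and no descents (i.e., E^{w0}_λ(x;0,0)), equals the Schur polynomial s_λ(x_1,...,x_n). -/

import Mathlib

namespace Paper

/-! ## Augmented fillings, triples, major index (HHL model) -/

/-- Tie-broken strict order on (value, subscript) pairs: equal values are
ordered by subscript. -/
def tlt (x y : ℕ × ℕ) : Prop := x.1 < y.1 ∨ (x.1 = y.1 ∧ x.2 < y.2)

/-- `cyc x y z`: the three tie-broken values, read increasingly, follow the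
cyclic order x → y → z. -/
def cyc (x y z : ℕ × ℕ) : Prop :=
  (tlt x y ∧ tlt y z) ∨ (tlt y z ∧ tlt z x) ∨ (tlt z x ∧ tlt x y)

variable {n : ℕ}

/-- A type A triple: `a = (r, j-1)`, `b = (r, j)`, `c = (r', j)` with `r'` below `r`
and the row of `a, b` at least as long as that of `c`. -/
def typeA (α : Fin n → ℕ) (r r' : Fin n) (j : ℕ) : Prop :=
  r < r' ∧ 1 ≤ j ∧ j ≤ α r ∧ j ≤ α r' ∧ α r' ≤ α r

/-- A type B triple: `a = (r, j-1)`, `b = (r, j)`, `c = (r', j-1)` with `r'` above `r`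
and the row of `a, b` strictly longer than that of `c`. -/
def typeB (α : Fin n → ℕ) (r r' : Fin n) (j : ℕ) : Prop :=
  r' < r ∧ 1 ≤ j ∧ j ≤ α r ∧ j - 1 ≤ α r' ∧ α r' < α r

/-- A type A triple is an inversion triple if the entries ordered increasingly
(with subscripts a₃, b₁, c₂ breaking ties) follow the counterclockwise cycle b → a → c. -/
def invA (F : Fin n → ℕ → ℕ) (r r' : Fin n) (j : ℕ) : Prop :=
  cyc (F r j, 1) (F r (j-1), 3) (F r' j, 2)

/-- A type B triple is an inversion triple if the entries ordered increasingly
(with subscripts c₂, a₃, b₁ breaking ties) follow the clockwise cycle c → b → a. -/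
def invB (F : Fin n → ℕ → ℕ) (r r' : Fin n) (j : ℕ) : Prop :=
  cyc (F r' (j-1), 2) (F r j, 1) (F r (j-1), 3)

/-- Coinversion-free: every type A and type B triple is an inversion triple. -/
def CoinvFree (α : Fin n → ℕ) (F : Fin n → ℕ → ℕ) : Prop :=
  (∀ r r' j, typeA α r r' j → invA F r r' j) ∧
  (∀ r r' j, typeB α r r' j → invB F r r' j)

/-- Inversion-free: no type A or type B triple is an inversion triple. -/
def InvFree (α : Fin n → ℕ) (F : Fin n → ℕ → ℕ) : Prop :=
  (∀ r r' j, typeA α r r' j → ¬ invA F r r' j) ∧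
  (∀ r r' j, typeB α r r' j → ¬ invB F r r' j)

/-- The major index: the sum of `leg(u) + 1` over all descents `u`
(non-basement boxes whose entry strictly exceeds that of their left neighbour). -/
def maj (α : Fin n → ℕ) (F : Fin n → ℕ → ℕ) : ℕ :=
  ∑ i : Fin n, ∑ j ∈ Finset.Icc 1 (α i), if F i (j-1) < F i j then α i - j + 1 else 0

/-- The non-basement part of a filling of shape `α`, with entries encoded as
`Fin n` (representing the values `1, …, n`). -/
abbrev Fill (n : ℕ) (α : Fin n → ℕ) := (i : Fin n) → Fin (α i) → Fin n

/-- The entry of the augmented filling at row `i`, column `j`; column `0` is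
the basement `σ`, and column `j ≥ 1` holds the value `G i (j-1) + 1 ∈ {1, …, n}`. -/
def entry (α : Fin n → ℕ) (σ : Fin n → ℕ) (G : Fill n α) : Fin n → ℕ → ℕ :=
  fun i j => if j = 0 then σ i else if h : j - 1 < α i then ((G i ⟨j - 1, h⟩ : ℕ) + 1) else 0

/-- The key basement `w₀ = (n, n-1, …, 1)`, read top to bottom. -/
def keyBasement (n : ℕ) : Fin n → ℕ := fun i => n - (i : ℕ)

/-- The reversal on `Fin n` (0-indexed version of `i ↦ n + 1 - i`). -/
def revFin {n : ℕ} (k : Fin n) : Fin n := ⟨n - 1 - (k : ℕ), by have := k.isLt; omega⟩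

/-- The set of entries of the `j`-th (non-basement, `j ≥ 1`) column. -/
def colFinset (α : Fin n → ℕ) (σ : Fin n → ℕ) (G : Fill n α) (j : ℕ) : Finset ℕ :=
  (Finset.univ.filter (fun i : Fin n => j ≤ α i)).image (fun i => entry α σ G i j)

/-- The multiset of entries of the `j`-th (non-basement, `j ≥ 1`) column. -/
def colMultiset (α : Fin n → ℕ) (σ : Fin n → ℕ) (G : Fill n α) (j : ℕ) : Multiset ℕ :=
  (Finset.univ.filter (fun i : Fin n => j ≤ α i)).val.map (fun i => entry α σ G i j)

/-- The multiset of all non-basement entries (the weight of the filling). -/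
def allEntries (α : Fin n → ℕ) (G : Fill n α) : Multiset ℕ :=
  ∑ i : Fin n, ((Finset.univ : Finset (Fin (α i))).val.map (fun j => (G i j : ℕ) + 1))

/-- The largest part of `α`. -/
def maxPart (α : Fin n → ℕ) : ℕ := Finset.univ.sup α

/-- The down-increasing condition on a column with entries `d` (top), `e` (middle),
`f` (bottom): `e > d > f` or `d > f > e` or `f > e > d`. -/
def downInc (d e f : ℕ) : Prop := (f < d ∧ d < e) ∨ (e < f ∧ f < d) ∨ (d < e ∧ e < f)

/-! ## Generating polynomials; the variables `x_1, x_2, …` are indexed by `ℕ`,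
and `q` is the variable of the coefficient ring `ℤ[q]`. -/

/-- The monomial `x^F` of a filling. -/
noncomputable def xwt (α : Fin n → ℕ) (G : Fill n α) : MvPolynomial ℕ (Polynomial ℤ) :=
  ∏ i : Fin n, ∏ j : Fin (α i), MvPolynomial.X ((G i j : ℕ) + 1)

open Classical in
/-- `E^σ_α(x; q, 0) = Σ_{F coinversion-free} q^{maj F} x^F`. -/
noncomputable def Epoly (α σ : Fin n → ℕ) : MvPolynomial ℕ (Polynomial ℤ) :=
  ∑ G : Fill n α, if CoinvFree α (entry α σ G) then
    MvPolynomial.C (Polynomial.X ^ maj α (entry α σ G)) * xwt α G else 0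

open Classical in
/-- `H̃^σ_α(x; q, 0) = Σ_{F inversion-free} q^{maj F} x^F`. -/
noncomputable def Hpoly (α σ : Fin n → ℕ) : MvPolynomial ℕ (Polynomial ℤ) :=
  ∑ G : Fill n α, if InvFree α (entry α σ G) then
    MvPolynomial.C (Polynomial.X ^ maj α (entry α σ G)) * xwt α G else 0

/-! ## Tableaux and Schur polynomials -/

/-- A filling of the diagram of `ν` with entries in `Fin N` (values `1, …, N`). -/
abbrev Tab (m : ℕ) (ν : Fin m → ℕ) (N : ℕ) := (i : Fin m) → Fin (ν i) → Fin N

/-- Semistandardness: rows weakly increase, columns strictly increase. -/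
def IsSSYT {m N : ℕ} (ν : Fin m → ℕ) (T : Tab m ν N) : Prop :=
  (∀ i : Fin m, ∀ j j' : Fin (ν i), j ≤ j' → T i j ≤ T i j') ∧
  (∀ i i' : Fin m, i < i' → ∀ j : Fin (ν i'), ∀ hj : (j : ℕ) < ν i, T i ⟨j, hj⟩ < T i' j)

/-- Number of occurrences of the value `v` in the tableau. -/
def tabCount {m N : ℕ} (ν : Fin m → ℕ) (T : Tab m ν N) (v : Fin N) : ℕ :=
  ∑ i : Fin m, (Finset.univ.filter (fun j : Fin (ν i) => T i j = v)).card

/-- The monomial `x^T` of a tableau. -/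
noncomputable def xwtTab {m N : ℕ} (ν : Fin m → ℕ) (T : Tab m ν N) :
    MvPolynomial ℕ (Polynomial ℤ) :=
  ∏ i : Fin m, ∏ j : Fin (ν i), MvPolynomial.X ((T i j : ℕ) + 1)

open Classical in
/-- The Schur polynomial `s_ν(x_1, …, x_N)` as the generating function of SSYT. -/
noncomputable def schurPoly (m : ℕ) (ν : Fin m → ℕ) (N : ℕ) : MvPolynomial ℕ (Polynomial ℤ) :=
  ∑ T : Tab m ν N, if IsSSYT ν T then xwtTab ν T else 0

/-- The reading word of a tableau: rows left to right, bottom row first. -/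
def readingWord {m N : ℕ} (ν : Fin m → ℕ) (T : Tab m ν N) : List ℕ :=
  ((List.finRange m).reverse).flatMap
    (fun i => (List.finRange (ν i)).map (fun j => (T i j : ℕ) + 1))

/-- The conjugate shape: `ν'_j = #{i : ν_i ≥ j}`. -/
def conjShape (m : ℕ) (ν : Fin m → ℕ) : Fin m → ℕ :=
  fun j => (Finset.univ.filter (fun i => (j : ℕ) + 1 ≤ ν i)).card

/-! ## Charge and cocharge of words -/

/-- Minimum of a list, if nonempty. -/
def listMin : List ℕ → Option ℕ
  | [] => none
  | a :: t => match listMin t with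
    | none => some a
    | some b => some (min a b)

/-- The major index of a list: the sum of the (1-indexed) positions of descents. -/
def majList (l : List ℕ) : ℕ :=
  (List.range (l.length - 1)).foldl
    (fun acc i => if l.getD (i+1) 0 < l.getD i 0 then acc + i + 1 else acc) 0

/-- The inverse of a word `w` that is a permutation of `1, …, k`:
its `v`-th letter is the (1-indexed) position of `v` in `w`. -/
def invPerm (w : List ℕ) : List ℕ :=
  (List.range w.length).map (fun v => w.idxOf (v+1) + 1)

/-- Charge of a permutation word: `maj(reverse(w⁻¹))`. -/
def chargePerm (w : List ℕ) : ℕ := majList (invPerm w).reverse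

/-- Cocharge of a permutation word: the binomial maximum minus the charge. -/
def cochargePerm (w : List ℕ) : ℕ := w.length.choose 2 - chargePerm w

/-- Largest index `< p` where `w` has the letter `t`. -/
def findBelow (w : List ℕ) (p t : ℕ) : Option ℕ :=
  ((List.range p).filter (fun i => w.getD i 0 == t)).getLast?

/-- Largest index where `w` has the letter `t` (used for wrap-around). -/
def findAny (w : List ℕ) (t : ℕ) : Option ℕ :=
  ((List.range w.length).filter (fun i => w.getD i 0 == t)).getLast?

/-- Extraction scan: from position `p`, scanning right to left (wrapping around if
necessary) find the letter `t`, then continue with the next larger letter value. -/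
def extractGo (w : List ℕ) : ℕ → ℕ → ℕ → List ℕ → List ℕ
  | 0, _, _, acc => acc
  | fuel+1, p, t, acc =>
    match (match findBelow w p t with | some i => some i | none => findAny w t) with
    | none => acc
    | some i =>
      match listMin (w.filter (fun x => decide (t < x))) with
      | none => i :: acc
      | some t' => extractGo w fuel i t' (i :: acc)

/-- Indices of the first standard subword of `w` (rightmost occurrence of the
smallest letter, then the right-to-left wrap-around scan up to the largest letter). -/
def extractIndices (w : List ℕ) : List ℕ :=
  match listMin w with
  | none => []
  | some v0 => extractGo w w.length w.length v0 []

/-- The standard subword decomposition of a word (with fuel). -/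
def subwordsGo : ℕ → List ℕ → List (List ℕ)
  | 0, _ => []
  | fuel+1, w =>
    if w.isEmpty then [] else
    let I := extractIndices w
    let sub := ((List.range w.length).filter (fun i => I.contains i)).map (fun i => w.getD i 0)
    let rest := ((List.range w.length).filter (fun i => !(I.contains i))).map (fun i => w.getD i 0)
    sub :: subwordsGo fuel rest

/-- The standard subwords of a word. -/
def subwords (w : List ℕ) : List (List ℕ) := subwordsGo w.length w

/-- Charge of a word: the sum of the charges of its standard subwords. -/
def chargeWord (w : List ℕ) : ℕ := ((subwords w).map chargePerm).sum

/-- Cocharge of a word: the sum of the cocharges of its standard subwords. -/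
def cochargeWord (w : List ℕ) : ℕ := ((subwords w).map cochargePerm).sum

/-- The charge word `cw(F)`: list the entries in increasing order (ties broken by
increasing column index) and record their column indices. -/
def cw (α σ : Fin n → ℕ) (G : Fill n α) : List ℕ :=
  (List.range n).flatMap (fun v =>
    (List.range (maxPart α)).filterMap (fun j =>
      if ∃ i : Fin n, j + 1 ≤ α i ∧ entry α σ G i (j+1) = v + 1 then some (j+1) else none))

/-- The cocharge word `ccw(F)`: list the entries in decreasing order (ties broken by
increasing column index, with multiplicity) and record their column indices. -/
def ccw (α σ : Fin n → ℕ) (G : Fill n α) : List ℕ :=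
  ((List.range n).reverse).flatMap (fun v =>
    (List.range (maxPart α)).flatMap (fun j =>
      List.replicate ((Finset.univ.filter
        (fun i : Fin n => j + 1 ≤ α i ∧ entry α σ G i (j+1) = v + 1)).card) (j+1)))

/-! ## Two-row fillings as lists (including the basement at index 0) -/

/-- The entry function of a two-row filling with top row `T` and bottom row `B`
(both including their basement entry at index 0). -/
def twoRowEntry (T B : List ℕ) : Fin 2 → ℕ → ℕ :=
  fun i j => if i.val = 0 then T.getD j 0 else B.getD j 0

/-- The multiset of entries in column `j` of a two-row filling. -/
def colM (T B : List ℕ) (j : ℕ) : Multiset ℕ :=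
  (if j < T.length then {T.getD j 0} else 0) + (if j < B.length then {B.getD j 0} else 0)

/-- The filling rule at a two-entry column `{A, B}` with bottom reference entry `C`,
returning (bottom entry, top entry): the least entry greater than `C` goes to the
bottom if one exists, otherwise the smallest entry goes to the bottom. -/
def phiRule (C A B : ℕ) : ℕ × ℕ :=
  if C < A ∧ C < B then (min A B, max A B)
  else if C < A then (A, B)
  else if C < B then (B, A)
  else (min A B, max A B)

/-- Process the two-entry columns right to left (input and output reversed),
threading the current bottom reference entry `C`. -/
def phiPairs : List (ℕ × ℕ) → ℕ → List (ℕ × ℕ)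
  | [], _ => []
  | (A, B) :: r, C =>
    let q := phiRule C A B
    q :: phiPairs r q.1

/-- The filling-rule map `φ` on a two-row filling with rows `T` (long, incl. basement)
and `B` (short, incl. basement): single-entry columns go to the bottom row, two-entry
columns are resolved by `phiRule`, processing right to left.
Returns (new long bottom row, new short top row). -/
def phi (T B : List ℕ) : List ℕ × List ℕ :=
  let k := B.length
  let tail := T.drop k
  let C0 := T.getD k 0
  let res := (phiPairs ((T.take k).zip B).reverse C0).reverse
  (res.map Prod.fst ++ tail, res.map Prod.snd)



/-! ## Auxiliary development for the proof -/

section KeyChar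

variable {n : ℕ}

lemma cyc_resolve {aa bb cc : ℕ} (hba : bb ≤ aa) (h : cyc (bb,1) (aa,3) (cc,2)) :
    cc < bb ∨ aa < cc := by
  simp only [cyc, tlt] at h; omega

lemma cyc_intro {aa bb cc : ℕ} (hba : bb ≤ aa) (hcb : cc < bb) : cyc (bb,1) (aa,3) (cc,2) := by
  simp only [cyc, tlt]; omega

/-- Reverse-semistandard condition on a filling: rows weakly decrease,
columns strictly decrease. -/
def RS (lam : Fin n → ℕ) (G : Fill n lam) : Prop :=
  (∀ i : Fin n, ∀ j j' : Fin (lam i), j ≤ j' → G i j' ≤ G i j) ∧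
  (∀ i i' : Fin n, i < i' → ∀ j : Fin (lam i'), ∀ hj : (j : ℕ) < lam i, G i' j < G i ⟨j, hj⟩)

lemma entry_zero (lam σ : Fin n → ℕ) (G : Fill n lam) (i : Fin n) :
    entry lam σ G i 0 = σ i := rfl

lemma entry_succ (lam σ : Fin n → ℕ) (G : Fill n lam) (i : Fin n) (j : ℕ) (h : j < lam i) :
    entry lam σ G i (j+1) = (G i ⟨j, h⟩ : ℕ) + 1 := by
  simp [entry, h]

lemma maj_eq_zero_iff (lam : Fin n → ℕ) (F : Fin n → ℕ → ℕ) :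
    maj lam F = 0 ↔ ∀ i : Fin n, ∀ j, 1 ≤ j → j ≤ lam i → F i j ≤ F i (j-1) := by
  classical
  unfold maj
  rw [Finset.sum_eq_zero_iff]
  constructor
  · intro H i j h1 h2
    have := H i (Finset.mem_univ i)
    rw [Finset.sum_eq_zero_iff] at this
    have h3 := this j (Finset.mem_Icc.mpr ⟨h1, h2⟩)
    by_contra hlt
    rw [if_pos (by omega)] at h3
    omega
  · intro H i _
    apply Finset.sum_eq_zero
    intro j hj
    rw [Finset.mem_Icc] at hj
    rw [if_neg]
    have := H i j hj.1 hj.2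
    omega

theorem key_iff_RS (lam : Fin n → ℕ) (hlam : ∀ i j : Fin n, i ≤ j → lam j ≤ lam i)
    (G : Fill n lam) :
    (CoinvFree lam (entry lam (keyBasement n) G) ∧
      maj lam (entry lam (keyBasement n) G) = 0) ↔ RS lam G := by
  set F := entry lam (keyBasement n) G with hF
  constructor
  · rintro ⟨hC, hM⟩
    have row : ∀ i : Fin n, ∀ j, 1 ≤ j → j ≤ lam i → F i j ≤ F i (j-1) :=
      (maj_eq_zero_iff lam F).mp hM
    -- column strictness, by induction on the column index
    have col : ∀ j : ℕ, ∀ i i' : Fin n, i < i' → j ≤ lam i' → F i' j < F i j := by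
      intro j
      induction j with
      | zero =>
        intro i i' hii' _
        have h1 : (i : ℕ) < i' := hii'
        have h2 : (i' : ℕ) < n := i'.isLt
        simp only [hF, entry_zero, keyBasement]
        omega
      | succ t ih =>
        intro i i' hii' hle
        by_contra hcon
        push_neg at hcon
        have hA : typeA lam i i' (t+1) :=
          ⟨hii', by omega, le_trans hle (hlam i i' (le_of_lt hii')), hle,
            hlam i i' (le_of_lt hii')⟩
        have hinv := hC.1 i i' (t+1) hA
        unfold invA at hinv
        have hba : F i (t+1) ≤ F i ((t+1)-1) :=
          row i (t+1) (by omega) (le_trans hle (hlam i i' (le_of_lt hii')))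
        simp only [Nat.add_sub_cancel] at hba hinv
        rcases cyc_resolve hba hinv with h | h
        · omega
        · have h1 : F i' (t+1) ≤ F i' t := by
            have := row i' (t+1) (by omega) hle
            simpa using this
          have h2 : F i' t < F i t := ih i i' hii' (by omega)
          omega
    constructor
    · -- rows weakly decreasing
      intro i j j' hjj'
      have chain : ∀ s : ℕ, ∀ hs : s < lam i, ∀ t : ℕ, ∀ ht : t < lam i, t ≤ s →
          (G i ⟨s, hs⟩ : ℕ) ≤ G i ⟨t, ht⟩ := by
        intro s
        induction s with
        | zero =>
          intro hs t ht hts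
          have : t = 0 := by omega
          subst this
          exact le_refl _
        | succ u ihu =>
          intro hs t ht hts
          rcases Nat.eq_or_lt_of_le hts with h | h
          · subst h; exact le_refl _
          · have step : (G i ⟨u+1, hs⟩ : ℕ) ≤ G i ⟨u, by omega⟩ := by
              have := row i (u+2) (by omega) (by omega)
              rw [show (u+2) - 1 = u+1 from rfl] at this
              rw [hF, entry_succ lam _ G i (u+1) hs, entry_succ lam _ G i u (by omega)] at this
              omega
            exact le_trans step (ihu (by omega) t ht (by omega))
      exact Fin.le_def.mpr (chain (j' : ℕ) j'.isLt (j : ℕ) j.isLt hjj')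
    · -- columns strictly decreasing
      intro i i' hii' j hj
      have := col ((j : ℕ)+1) i i' hii' (by omega)
      rw [hF, entry_succ lam _ G i' (j : ℕ) j.isLt, entry_succ lam _ G i (j : ℕ) hj] at this
      have h2 : (G i' j : ℕ) + 1 < (G i ⟨(j : ℕ), hj⟩ : ℕ) + 1 := this
      exact Fin.lt_def.mpr (by omega)
  · rintro ⟨hrow, hcol⟩
    -- flag condition from the strict columns
    have flag : ∀ t : ℕ, ∀ ht : t < n, ∀ h0 : 0 < lam ⟨t, ht⟩,
        (G ⟨t, ht⟩ ⟨0, h0⟩ : ℕ) + t < n := by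
      intro t
      induction t with
      | zero => intro ht h0; simpa using (G ⟨0, ht⟩ ⟨0, h0⟩).isLt
      | succ u ihu =>
        intro ht h0
        have hu : u < n := by omega
        have h0' : 0 < lam ⟨u, hu⟩ :=
          lt_of_lt_of_le h0 (hlam ⟨u, hu⟩ ⟨u+1, ht⟩ (Fin.mk_le_mk.mpr (by omega)))
        have hlt := hcol ⟨u, hu⟩ ⟨u+1, ht⟩ (Fin.mk_lt_mk.mpr (by omega)) ⟨0, h0⟩ h0'
        have := ihu hu h0'
        simp only [Fin.lt_def] at hlt
        omega
    have rowsF : ∀ i : Fin n, ∀ j, 1 ≤ j → j ≤ lam i → F i j ≤ F i (j-1) := by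
      intro i j h1 h2
      rcases j with _ | t
      · omega
      rcases t with _ | u
      · -- j = 1 : compare with the basement
        have h0 : 0 < lam i := by omega
        have hfl : (G i ⟨0, h0⟩ : ℕ) + (i : ℕ) < n := flag i.1 i.2 h0
        rw [hF, show (1:ℕ) - 1 = 0 from rfl, entry_succ lam _ G i 0 h0]
        rw [entry_zero]
        simp only [keyBasement]
        omega
      · -- j = u+2 : interior row step
        have hu1 : u + 1 < lam i := by omega
        have hle : (⟨u, by omega⟩ : Fin (lam i)) ≤ ⟨u+1, hu1⟩ := Fin.mk_le_mk.mpr (by omega)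
        have := hrow i ⟨u, by omega⟩ ⟨u+1, hu1⟩ hle
        rw [hF, show (u+2) - 1 = u+1 from rfl, entry_succ lam _ G i (u+1) hu1,
          entry_succ lam _ G i u (by omega)]
        simp only [Fin.le_def] at this
        omega
    refine ⟨⟨?_, ?_⟩, (maj_eq_zero_iff lam F).mpr rowsF⟩
    · -- type A triples are inversion triples
      intro r r' j hA
      obtain ⟨hrr', hj1, hjr, hjr', hlen⟩ := hA
      unfold invA
      apply cyc_intro
      · have := rowsF r j hj1 hjr
        exact this
      · -- F r' j < F r j
        obtain ⟨t, rfl⟩ : ∃ t, j = t + 1 := ⟨j - 1, by omega⟩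
        have ht' : t < lam r' := by omega
        have ht : t < lam r := by omega
        have := hcol r r' hrr' ⟨t, ht'⟩ ht
        rw [hF, entry_succ lam _ G r' t ht', entry_succ lam _ G r t ht]
        simp only [Fin.lt_def] at this
        omega
    · -- no type B triples
      intro r r' j hB
      exfalso
      have h1 : r' < r := hB.1
      have h2 : lam r' < lam r := hB.2.2.2.2
      have := hlam r' r (le_of_lt h1)
      omega

end KeyChar


section BK

variable {m N : ℕ}

/-- The cell below `(i,j)` exists and carries the value `b`. -/
def belowB (ν : Fin m → ℕ) (b : Fin N) (T : Tab m ν N) (i : Fin m) (j : ℕ) : Prop :=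
  ∃ (h1 : (i : ℕ) + 1 < m) (h2 : j < ν ⟨(i : ℕ) + 1, h1⟩), T ⟨(i : ℕ) + 1, h1⟩ ⟨j, h2⟩ = b

/-- The cell above `(i,j)` exists and carries the value `a`. -/
def aboveA (ν : Fin m → ℕ) (a : Fin N) (T : Tab m ν N) (i : Fin m) (j : ℕ) : Prop :=
  ∃ (_ : 0 < (i : ℕ)) (h2 : j < ν ⟨(i : ℕ) - 1, by have := i.isLt; omega⟩),
    T ⟨(i : ℕ) - 1, by have := i.isLt; omega⟩ ⟨j, h2⟩ = a

/-- Free cell of value `a`. -/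
def FA (ν : Fin m → ℕ) (a b : Fin N) (T : Tab m ν N) (i : Fin m) (j : Fin (ν i)) : Prop :=
  T i j = a ∧ ¬ belowB ν b T i (j : ℕ)

/-- Free cell of value `b`. -/
def FB (ν : Fin m → ℕ) (a b : Fin N) (T : Tab m ν N) (i : Fin m) (j : Fin (ν i)) : Prop :=
  T i j = b ∧ ¬ aboveA ν a T i (j : ℕ)

open Classical in
noncomputable def xcnt (ν : Fin m → ℕ) (a b : Fin N) (T : Tab m ν N) (i : Fin m) : ℕ :=
  (Finset.univ.filter
    (fun j : Fin (ν i) => T i j < a ∨ (T i j = a ∧ belowB ν b T i (j : ℕ)))).card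

open Classical in
noncomputable def facnt (ν : Fin m → ℕ) (a b : Fin N) (T : Tab m ν N) (i : Fin m) : ℕ :=
  (Finset.univ.filter (fun j : Fin (ν i) => FA ν a b T i j)).card

open Classical in
noncomputable def fbcnt (ν : Fin m → ℕ) (a b : Fin N) (T : Tab m ν N) (i : Fin m) : ℕ :=
  (Finset.univ.filter (fun j : Fin (ν i) => FB ν a b T i j)).card

open Classical in
noncomputable def lacnt (ν : Fin m → ℕ) (a b : Fin N) (T : Tab m ν N) (i : Fin m) : ℕ :=
  (Finset.univ.filter
    (fun j : Fin (ν i) => T i j = a ∧ belowB ν b T i (j : ℕ))).card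

open Classical in
noncomputable def lbcnt (ν : Fin m → ℕ) (a b : Fin N) (T : Tab m ν N) (i : Fin m) : ℕ :=
  (Finset.univ.filter
    (fun j : Fin (ν i) => T i j = b ∧ aboveA ν a T i (j : ℕ))).card

open Classical in
/-- The Bender–Knuth involution. -/
noncomputable def bk (ν : Fin m → ℕ) (a b : Fin N) (T : Tab m ν N) : Tab m ν N := fun i j =>
  if FA ν a b T i j ∨ FB ν a b T i j then
    (if (j : ℕ) < xcnt ν a b T i + fbcnt ν a b T i then a else b)
  else T i j

lemma initseg {k : ℕ} (S : Finset (Fin k))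
    (hdc : ∀ j j' : Fin k, j ≤ j' → j' ∈ S → j ∈ S) (j : Fin k) :
    j ∈ S ↔ (j : ℕ) < S.card := by
  constructor
  · intro hj
    have hsub : Finset.Iic j ⊆ S := fun t ht => hdc t j (Finset.mem_Iic.mp ht) hj
    have := Finset.card_le_card hsub
    rw [Fin.card_Iic] at this
    omega
  · intro hj
    by_contra hns
    have hsub : S ⊆ Finset.Iio j := by
      intro t ht
      rw [Finset.mem_Iio]
      rcases lt_or_ge (t : ℕ) (j : ℕ) with h | h
      · exact Fin.lt_def.mpr h
      · exact absurd (hdc j t (Fin.le_def.mpr h) ht) hns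
    have := Finset.card_le_card hsub
    rw [Fin.card_Iio] at this
    omega

open Classical in
lemma card_band {k u v : ℕ} (hv : v ≤ k) :
    ((Finset.univ : Finset (Fin k)).filter
      (fun (j : Fin k) => u ≤ (j : ℕ) ∧ (j : ℕ) < v)).card = v - u := by
  rw [← Nat.card_Ico u v]
  refine Finset.card_bij (fun (j : Fin k) _ => (j : ℕ)) ?_ ?_ ?_
  · intro j hj
    simp only [Finset.mem_filter] at hj
    exact Finset.mem_Ico.mpr ⟨hj.2.1, hj.2.2⟩
  · intro j1 h1 j2 h2 h
    exact Fin.ext h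
  · intro t ht
    rw [Finset.mem_Ico] at ht
    exact ⟨⟨t, by omega⟩, Finset.mem_filter.mpr ⟨Finset.mem_univ _, ht.1, ht.2⟩, rfl⟩

variable {ν : Fin m → ℕ} {a b : Fin N} {T : Tab m ν N}

lemma prefix_a (hT : IsSSYT ν T) (hab : (b : ℕ) = (a : ℕ) + 1) {i : Fin m}
    {j j' : Fin (ν i)} (hle : (j : ℕ) ≤ (j' : ℕ)) (hja : T i j = a)
    (hbb : belowB ν b T i (j' : ℕ)) : belowB ν b T i (j : ℕ) := by
  obtain ⟨h1, h2, heq⟩ := hbb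
  have h2' : (j : ℕ) < ν ⟨(i : ℕ) + 1, h1⟩ := lt_of_le_of_lt hle h2
  refine ⟨h1, h2', ?_⟩
  have hrow : T ⟨(i : ℕ)+1, h1⟩ ⟨(j : ℕ), h2'⟩ ≤ T ⟨(i : ℕ)+1, h1⟩ ⟨(j' : ℕ), h2⟩ :=
    hT.1 _ _ _ (Fin.mk_le_mk.mpr hle)
  have hcol : T i j < T ⟨(i : ℕ)+1, h1⟩ ⟨(j : ℕ), h2'⟩ :=
    hT.2 i ⟨(i : ℕ)+1, h1⟩ (Fin.lt_def.mpr (Nat.lt_succ_self _)) ⟨(j : ℕ), h2'⟩ j.isLt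
  have e1 : (a : ℕ) < (T ⟨(i : ℕ)+1, h1⟩ ⟨(j : ℕ), h2'⟩ : ℕ) := by
    rw [← hja]; exact Fin.lt_def.mp hcol
  have e2 := Fin.le_def.mp hrow
  have e3 : (T ⟨(i : ℕ)+1, h1⟩ ⟨(j' : ℕ), h2⟩ : ℕ) = (b : ℕ) := by rw [heq]
  exact Fin.ext (by omega)

lemma suffix_b (hν : ∀ i j : Fin m, i ≤ j → ν j ≤ ν i) (hT : IsSSYT ν T)
    (hab : (b : ℕ) = (a : ℕ) + 1) {i : Fin m} {j j' : Fin (ν i)}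
    (hle : (j : ℕ) ≤ (j' : ℕ)) (hjb : T i j' = b) (haa : aboveA ν a T i (j : ℕ)) :
    aboveA ν a T i (j' : ℕ) := by
  obtain ⟨h1, h2, heq⟩ := haa
  have hprev : (i : ℕ) - 1 < m := by have := i.isLt; omega
  have hle2 : (⟨(i : ℕ) - 1, hprev⟩ : Fin m) ≤ i := Fin.le_def.mpr (Nat.sub_le _ _)
  have h2' : (j' : ℕ) < ν ⟨(i : ℕ) - 1, hprev⟩ := lt_of_lt_of_le j'.isLt (hν _ i hle2)
  refine ⟨h1, h2', ?_⟩
  have hrow : T ⟨(i : ℕ)-1, hprev⟩ ⟨(j : ℕ), h2⟩ ≤ T ⟨(i : ℕ)-1, hprev⟩ ⟨(j' : ℕ), h2'⟩ :=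
    hT.1 _ _ _ (Fin.mk_le_mk.mpr hle)
  have hcol : T ⟨(i : ℕ)-1, hprev⟩ ⟨(j' : ℕ), h2'⟩ < T i j' :=
    hT.2 _ i (Fin.lt_def.mpr (Nat.sub_lt h1 one_pos)) j' h2'
  have e1 : (T ⟨(i : ℕ)-1, hprev⟩ ⟨(j' : ℕ), h2'⟩ : ℕ) < (b : ℕ) := by
    rw [← hjb]; exact Fin.lt_def.mp hcol
  have e2 := Fin.le_def.mp hrow
  have e3 : (T ⟨(i : ℕ)-1, hprev⟩ ⟨(j : ℕ), h2⟩ : ℕ) = (a : ℕ) := by rw [heq]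
  exact Fin.ext (by omega)

lemma below_of_FA (hT : IsSSYT ν T) (hab : (b : ℕ) = (a : ℕ) + 1) {i : Fin m}
    {j : Fin (ν i)} (hFA : FA ν a b T i j) (h1 : (i : ℕ) + 1 < m)
    (h2 : (j : ℕ) < ν ⟨(i : ℕ) + 1, h1⟩) :
    (b : ℕ) < (T ⟨(i : ℕ)+1, h1⟩ ⟨(j : ℕ), h2⟩ : ℕ) := by
  have hcol : T i j < T ⟨(i : ℕ)+1, h1⟩ ⟨(j : ℕ), h2⟩ :=
    hT.2 i _ (Fin.lt_def.mpr (Nat.lt_succ_self _)) ⟨(j : ℕ), h2⟩ j.isLt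
  have e1 : (a : ℕ) < (T ⟨(i : ℕ)+1, h1⟩ ⟨(j : ℕ), h2⟩ : ℕ) := by
    rw [← hFA.1]; exact Fin.lt_def.mp hcol
  have hne : (T ⟨(i : ℕ)+1, h1⟩ ⟨(j : ℕ), h2⟩ : ℕ) ≠ (b : ℕ) :=
    fun hc => hFA.2 ⟨h1, h2, Fin.ext hc⟩
  omega

lemma above_of_FB (hT : IsSSYT ν T) (hab : (b : ℕ) = (a : ℕ) + 1) {i : Fin m}
    {j : Fin (ν i)} (hFB : FB ν a b T i j) (h1 : 0 < (i : ℕ))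
    (hprev : (i : ℕ) - 1 < m) (h2 : (j : ℕ) < ν ⟨(i : ℕ) - 1, hprev⟩) :
    (T ⟨(i : ℕ)-1, hprev⟩ ⟨(j : ℕ), h2⟩ : ℕ) < (a : ℕ) := by
  have hcol : T ⟨(i : ℕ)-1, hprev⟩ ⟨(j : ℕ), h2⟩ < T i j :=
    hT.2 _ i (Fin.lt_def.mpr (Nat.sub_lt h1 one_pos)) j h2
  have e1 : (T ⟨(i : ℕ)-1, hprev⟩ ⟨(j : ℕ), h2⟩ : ℕ) < (b : ℕ) := by
    rw [← hFB.1]; exact Fin.lt_def.mp hcol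
  have hne : (T ⟨(i : ℕ)-1, hprev⟩ ⟨(j : ℕ), h2⟩ : ℕ) ≠ (a : ℕ) :=
    fun hc => hFB.2 ⟨h1, h2, Fin.ext hc⟩
  omega


section Intervals

open Classical in
lemma UL_iff (hab : (b : ℕ) = (a : ℕ) + 1) (hT : IsSSYT ν T) (i : Fin m) (j : Fin (ν i)) :
    (T i j < a ∨ (T i j = a ∧ belowB ν b T i (j : ℕ))) ↔ (j : ℕ) < xcnt ν a b T i := by
  have hdc : ∀ j j' : Fin (ν i), j ≤ j' →
      (T i j' < a ∨ (T i j' = a ∧ belowB ν b T i (j' : ℕ))) →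
      (T i j < a ∨ (T i j = a ∧ belowB ν b T i (j : ℕ))) := by
    intro j j' hle hp
    have hrow := Fin.le_def.mp (hT.1 i j j' hle)
    rcases Nat.lt_or_ge ((T i j : ℕ)) (a : ℕ) with hh | hh
    · exact Or.inl (Fin.lt_def.mpr hh)
    · rcases hp with h | ⟨h1, h2⟩
      · have := Fin.lt_def.mp h; exfalso; omega
      · have hv := congrArg Fin.val h1
        have he : T i j = a := Fin.ext (by omega)
        exact Or.inr ⟨he, prefix_a hT hab (Fin.le_def.mp hle) he h2⟩
  have h := initseg (Finset.univ.filter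
      (fun j : Fin (ν i) => T i j < a ∨ (T i j = a ∧ belowB ν b T i (j : ℕ))))
    (fun j j' hle hj' => Finset.mem_filter.mpr
      ⟨Finset.mem_univ _, hdc j j' hle (Finset.mem_filter.mp hj').2⟩) j
  rw [Finset.mem_filter] at h
  constructor
  · intro hp; exact h.mp ⟨Finset.mem_univ _, hp⟩
  · intro hc; exact (h.mpr hc).2

open Classical in
lemma card_ULA (i : Fin m) :
    (Finset.univ.filter (fun j : Fin (ν i) =>
      (T i j < a ∨ (T i j = a ∧ belowB ν b T i (j : ℕ))) ∨ FA ν a b T i j)).card =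
    xcnt ν a b T i + facnt ν a b T i := by
  rw [Finset.filter_or, Finset.card_union_of_disjoint]
  · rfl
  · rw [Finset.disjoint_left]
    intro j hj1 hj2
    rw [Finset.mem_filter] at hj1 hj2
    rcases hj1.2 with h | ⟨h1, h2⟩
    · have e1 := Fin.lt_def.mp h
      have e2 := congrArg Fin.val hj2.2.1
      omega
    · exact hj2.2.2 h2

open Classical in
lemma card_ULF (hab : (b : ℕ) = (a : ℕ) + 1) (i : Fin m) :
    (Finset.univ.filter (fun j : Fin (ν i) =>
      ((T i j < a ∨ (T i j = a ∧ belowB ν b T i (j : ℕ))) ∨ FA ν a b T i j) ∨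
        FB ν a b T i j)).card =
    xcnt ν a b T i + facnt ν a b T i + fbcnt ν a b T i := by
  rw [Finset.filter_or, Finset.card_union_of_disjoint]
  · rw [card_ULA]; rfl
  · rw [Finset.disjoint_left]
    intro j hj1 hj2
    rw [Finset.mem_filter] at hj1 hj2
    have eb := congrArg Fin.val hj2.2.1
    rcases hj1.2 with (h | ⟨h1, h2⟩) | ⟨h1, h2⟩
    · have := Fin.lt_def.mp h; omega
    · have := congrArg Fin.val h1; omega
    · have := congrArg Fin.val h1; omega

open Classical in
lemma ULA_iff (hab : (b : ℕ) = (a : ℕ) + 1) (hT : IsSSYT ν T) (i : Fin m) (j : Fin (ν i)) :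
    ((T i j < a ∨ (T i j = a ∧ belowB ν b T i (j : ℕ))) ∨ FA ν a b T i j) ↔
      (j : ℕ) < xcnt ν a b T i + facnt ν a b T i := by
  have hdc : ∀ j j' : Fin (ν i), j ≤ j' →
      ((T i j' < a ∨ (T i j' = a ∧ belowB ν b T i (j' : ℕ))) ∨ FA ν a b T i j') →
      ((T i j < a ∨ (T i j = a ∧ belowB ν b T i (j : ℕ))) ∨ FA ν a b T i j) := by
    intro j j' hle hp
    have hrow := Fin.le_def.mp (hT.1 i j j' hle)
    rcases Nat.lt_or_ge ((T i j : ℕ)) (a : ℕ) with hh | hh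
    · exact Or.inl (Or.inl (Fin.lt_def.mpr hh))
    · have haj' : ((T i j' : ℕ)) = (a : ℕ) := by
        rcases hp with (h | ⟨h1, _⟩) | ⟨h1, _⟩
        · have := Fin.lt_def.mp h; omega
        · exact congrArg Fin.val h1
        · exact congrArg Fin.val h1
      have he : T i j = a := Fin.ext (by omega)
      by_cases hbel : belowB ν b T i (j : ℕ)
      · exact Or.inl (Or.inr ⟨he, hbel⟩)
      · exact Or.inr ⟨he, hbel⟩
  have h := initseg (Finset.univ.filter (fun j : Fin (ν i) =>
      (T i j < a ∨ (T i j = a ∧ belowB ν b T i (j : ℕ))) ∨ FA ν a b T i j))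
    (fun j j' hle hj' => Finset.mem_filter.mpr
      ⟨Finset.mem_univ _, hdc j j' hle (Finset.mem_filter.mp hj').2⟩) j
  rw [Finset.mem_filter, card_ULA (a := a) (b := b)] at h
  constructor
  · intro hp; exact h.mp ⟨Finset.mem_univ _, hp⟩
  · intro hc; exact (h.mpr hc).2

open Classical in
lemma ULF_iff (hν : ∀ i j : Fin m, i ≤ j → ν j ≤ ν i) (hab : (b : ℕ) = (a : ℕ) + 1)
    (hT : IsSSYT ν T) (i : Fin m) (j : Fin (ν i)) :
    (((T i j < a ∨ (T i j = a ∧ belowB ν b T i (j : ℕ))) ∨ FA ν a b T i j) ∨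
      FB ν a b T i j) ↔
      (j : ℕ) < xcnt ν a b T i + facnt ν a b T i + fbcnt ν a b T i := by
  have hdc : ∀ j j' : Fin (ν i), j ≤ j' →
      (((T i j' < a ∨ (T i j' = a ∧ belowB ν b T i (j' : ℕ))) ∨ FA ν a b T i j') ∨
        FB ν a b T i j') →
      (((T i j < a ∨ (T i j = a ∧ belowB ν b T i (j : ℕ))) ∨ FA ν a b T i j) ∨
        FB ν a b T i j) := by
    intro j j' hle hp
    have hrow := Fin.le_def.mp (hT.1 i j j' hle)
    rcases Nat.lt_or_ge ((T i j : ℕ)) (a : ℕ) with hh | hh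
    · exact Or.inl (Or.inl (Or.inl (Fin.lt_def.mpr hh)))
    · have hub : ((T i j' : ℕ)) ≤ (b : ℕ) := by
        rcases hp with ((h | ⟨h1, _⟩) | ⟨h1, _⟩) | ⟨h1, _⟩
        · have := Fin.lt_def.mp h; omega
        · have := congrArg Fin.val h1; omega
        · have := congrArg Fin.val h1; omega
        · have := congrArg Fin.val h1; omega
      rcases Nat.eq_or_lt_of_le hh with hh2 | hh2
      · -- T i j = a
        have he : T i j = a := Fin.ext (by omega)
        by_cases hbel : belowB ν b T i (j : ℕ)
        · exact Or.inl (Or.inl (Or.inr ⟨he, hbel⟩))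
        · exact Or.inl (Or.inr ⟨he, hbel⟩)
      · -- T i j ≥ a + 1 = b, and T i j ≤ T i j' ≤ b, so T i j = b, T i j' = b
        have he : T i j = b := Fin.ext (by omega)
        have he' : T i j' = b := Fin.ext (by omega)
        by_cases habove : aboveA ν a T i (j : ℕ)
        · -- then j' is also locked, contradiction with hp
        
          have habove' : aboveA ν a T i (j' : ℕ) :=
            suffix_b hν hT hab (Fin.le_def.mp hle) he' habove
          exfalso
          rcases hp with ((h | ⟨h1, _⟩) | ⟨h1, _⟩) | ⟨h1, h2⟩
          · have := Fin.lt_def.mp h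
            have := congrArg Fin.val he'; omega
          · have := congrArg Fin.val h1
            have := congrArg Fin.val he'; omega
          · have := congrArg Fin.val h1
            have := congrArg Fin.val he'; omega
          · exact h2 habove'
        · exact Or.inr ⟨he, habove⟩
  have h := initseg (Finset.univ.filter (fun j : Fin (ν i) =>
      ((T i j < a ∨ (T i j = a ∧ belowB ν b T i (j : ℕ))) ∨ FA ν a b T i j) ∨
        FB ν a b T i j))
    (fun j j' hle hj' => Finset.mem_filter.mpr
      ⟨Finset.mem_univ _, hdc j j' hle (Finset.mem_filter.mp hj').2⟩) j
  rw [Finset.mem_filter, card_ULF hab] at h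
  constructor
  · intro hp; exact h.mp ⟨Finset.mem_univ _, hp⟩
  · intro hc; exact (h.mpr hc).2

lemma not_UL_of_FA {i : Fin m} {j : Fin (ν i)} (hFA : FA ν a b T i j) :
    ¬ (T i j < a ∨ (T i j = a ∧ belowB ν b T i (j : ℕ))) := by
  rintro (h | ⟨h1, h2⟩)
  · have e1 := Fin.lt_def.mp h
    have e2 := congrArg Fin.val hFA.1
    omega
  · exact hFA.2 h2

lemma not_ULA_of_FB (hab : (b : ℕ) = (a : ℕ) + 1) {i : Fin m} {j : Fin (ν i)}
    (hFB : FB ν a b T i j) :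
    ¬ ((T i j < a ∨ (T i j = a ∧ belowB ν b T i (j : ℕ))) ∨ FA ν a b T i j) := by
  have eb := congrArg Fin.val hFB.1
  rintro ((h | ⟨h1, _⟩) | ⟨h1, _⟩)
  · have := Fin.lt_def.mp h; omega
  · have := congrArg Fin.val h1; omega
  · have := congrArg Fin.val h1; omega

lemma freeA_iff (hab : (b : ℕ) = (a : ℕ) + 1) (hT : IsSSYT ν T) (i : Fin m) (j : Fin (ν i)) :
    FA ν a b T i j ↔
      (xcnt ν a b T i ≤ (j : ℕ) ∧ (j : ℕ) < xcnt ν a b T i + facnt ν a b T i) := by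
  constructor
  · intro hFA
    constructor
    · by_contra hc
      push_neg at hc
      exact not_UL_of_FA hFA ((UL_iff hab hT i j).mpr hc)
    · exact (ULA_iff hab hT i j).mp (Or.inr hFA)
  · rintro ⟨h1, h2⟩
    rcases (ULA_iff hab hT i j).mpr h2 with h | h
    · exact absurd ((UL_iff hab hT i j).mp h) (by omega)
    · exact h

lemma freeB_iff (hν : ∀ i j : Fin m, i ≤ j → ν j ≤ ν i) (hab : (b : ℕ) = (a : ℕ) + 1)
    (hT : IsSSYT ν T) (i : Fin m) (j : Fin (ν i)) :
    FB ν a b T i j ↔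
      (xcnt ν a b T i + facnt ν a b T i ≤ (j : ℕ) ∧
        (j : ℕ) < xcnt ν a b T i + facnt ν a b T i + fbcnt ν a b T i) := by
  constructor
  · intro hFB
    constructor
    · by_contra hc
      push_neg at hc
      exact not_ULA_of_FB hab hFB ((ULA_iff hab hT i j).mpr hc)
    · exact (ULF_iff hν hab hT i j).mp (Or.inr hFB)
  · rintro ⟨h1, h2⟩
    rcases (ULF_iff hν hab hT i j).mpr h2 with h | h
    · exact absurd ((ULA_iff hab hT i j).mp h) (by omega)
    · exact h

lemma free_iff (hν : ∀ i j : Fin m, i ≤ j → ν j ≤ ν i) (hab : (b : ℕ) = (a : ℕ) + 1)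
    (hT : IsSSYT ν T) (i : Fin m) (j : Fin (ν i)) :
    (FA ν a b T i j ∨ FB ν a b T i j) ↔
      (xcnt ν a b T i ≤ (j : ℕ) ∧
        (j : ℕ) < xcnt ν a b T i + facnt ν a b T i + fbcnt ν a b T i) := by
  rw [freeA_iff hab hT, freeB_iff hν hab hT]
  omega

open Classical in
lemma ulf_le (hab : (b : ℕ) = (a : ℕ) + 1) (i : Fin m) :
    xcnt ν a b T i + facnt ν a b T i + fbcnt ν a b T i ≤ ν i := by
  rw [← card_ULF hab (T := T) (i := i)]
  calc (Finset.univ.filter _).card ≤ (Finset.univ : Finset (Fin (ν i))).card :=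
        Finset.card_filter_le _ _
    _ = ν i := by simp

open Classical in
lemma card_free_lt (hν : ∀ i j : Fin m, i ≤ j → ν j ≤ ν i) (hab : (b : ℕ) = (a : ℕ) + 1)
    (hT : IsSSYT ν T) (i : Fin m) :
    (Finset.univ.filter (fun j : Fin (ν i) =>
      (FA ν a b T i j ∨ FB ν a b T i j) ∧
        (j : ℕ) < xcnt ν a b T i + fbcnt ν a b T i)).card = fbcnt ν a b T i := by
  have hle := ulf_le hab (T := T) (i := i)
  rw [Finset.filter_congr (q := fun j : Fin (ν i) =>
      xcnt ν a b T i ≤ (j : ℕ) ∧ (j : ℕ) < xcnt ν a b T i + fbcnt ν a b T i) ?_]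
  · rw [card_band (by omega)]
    omega
  · intro j _
    rw [free_iff hν hab hT]
    constructor
    · rintro ⟨⟨h1, _⟩, h3⟩; exact ⟨h1, h3⟩
    · rintro ⟨h1, h2⟩; exact ⟨⟨h1, by omega⟩, h2⟩

open Classical in
lemma card_free_ge (hν : ∀ i j : Fin m, i ≤ j → ν j ≤ ν i) (hab : (b : ℕ) = (a : ℕ) + 1)
    (hT : IsSSYT ν T) (i : Fin m) :
    (Finset.univ.filter (fun j : Fin (ν i) =>
      (FA ν a b T i j ∨ FB ν a b T i j) ∧
        ¬ ((j : ℕ) < xcnt ν a b T i + fbcnt ν a b T i))).card = facnt ν a b T i := by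
  have hle := ulf_le hab (T := T) (i := i)
  rw [Finset.filter_congr (q := fun j : Fin (ν i) =>
      xcnt ν a b T i + fbcnt ν a b T i ≤ (j : ℕ) ∧
        (j : ℕ) < xcnt ν a b T i + facnt ν a b T i + fbcnt ν a b T i) ?_]
  · rw [card_band (by omega)]
    omega
  · intro j _
    rw [free_iff hν hab hT]
    constructor
    · rintro ⟨⟨h1, h2⟩, h3⟩; exact ⟨by omega, h2⟩
    · rintro ⟨h1, h2⟩; exact ⟨⟨by omega, h2⟩, by omega⟩

end Intervals

end BK


section BKmain

variable {m N : ℕ} {ν : Fin m → ℕ} {a b : Fin N} {T : Tab m ν N}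

lemma bk_free {i : Fin m} {j : Fin (ν i)} (h : FA ν a b T i j ∨ FB ν a b T i j) :
    bk ν a b T i j = if (j : ℕ) < xcnt ν a b T i + fbcnt ν a b T i then a else b := by
  simp only [bk, if_pos h]

lemma bk_unfree {i : Fin m} {j : Fin (ν i)} (h : ¬ (FA ν a b T i j ∨ FB ν a b T i j)) :
    bk ν a b T i j = T i j := by
  simp only [bk, if_neg h]

lemma range_low (hν : ∀ i j : Fin m, i ≤ j → ν j ≤ ν i) (hab : (b : ℕ) = (a : ℕ) + 1)
    (hT : IsSSYT ν T) {i : Fin m} {j : Fin (ν i)} (hj : (j : ℕ) < xcnt ν a b T i) :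
    ¬ (FA ν a b T i j ∨ FB ν a b T i j) ∧ (T i j : ℕ) ≤ (a : ℕ) := by
  constructor
  · intro hfree
    have := (free_iff hν hab hT i j).mp hfree
    omega
  · have := (UL_iff hab hT i j).mpr hj
    rcases this with h | ⟨h1, _⟩
    · have := Fin.lt_def.mp h; omega
    · have := congrArg Fin.val h1; omega

lemma range_high (hν : ∀ i j : Fin m, i ≤ j → ν j ≤ ν i) (hab : (b : ℕ) = (a : ℕ) + 1)
    (hT : IsSSYT ν T) {i : Fin m} {j : Fin (ν i)}
    (hj : xcnt ν a b T i + facnt ν a b T i + fbcnt ν a b T i ≤ (j : ℕ)) :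
    ¬ (FA ν a b T i j ∨ FB ν a b T i j) ∧ (b : ℕ) ≤ (T i j : ℕ) := by
  have hnf : ¬ (FA ν a b T i j ∨ FB ν a b T i j) := by
    intro hfree
    have := (free_iff hν hab hT i j).mp hfree
    omega
  refine ⟨hnf, ?_⟩
  rcases Nat.lt_trichotomy ((T i j : ℕ)) ((a : ℕ)) with hh | hh | hh
  · have := (UL_iff hab hT i j).mp (Or.inl (Fin.lt_def.mpr hh))
    omega
  · have he : T i j = a := Fin.ext hh
    by_cases hbel : belowB ν b T i (j : ℕ)
    · have := (UL_iff hab hT i j).mp (Or.inr ⟨he, hbel⟩)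
      omega
    · exact absurd (Or.inl ⟨he, hbel⟩) hnf
  · omega

lemma bk_row_mono (hν : ∀ i j : Fin m, i ≤ j → ν j ≤ ν i) (hab : (b : ℕ) = (a : ℕ) + 1)
    (hT : IsSSYT ν T) :
    ∀ (i : Fin m) (j j' : Fin (ν i)), j ≤ j' → bk ν a b T i j ≤ bk ν a b T i j' := by
  intro i j j' hle
  have hlv := Fin.le_def.mp hle
  by_cases hfj : FA ν a b T i j ∨ FB ν a b T i j
  · by_cases hfj' : FA ν a b T i j' ∨ FB ν a b T i j'
    · rw [bk_free hfj, bk_free hfj']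
      by_cases c1 : (j : ℕ) < xcnt ν a b T i + fbcnt ν a b T i
      · rw [if_pos c1]
        by_cases c2 : (j' : ℕ) < xcnt ν a b T i + fbcnt ν a b T i
        · rw [if_pos c2]
        · rw [if_neg c2]; exact Fin.le_def.mpr (by omega)
      · rw [if_neg c1]
        have c2 : ¬ (j' : ℕ) < xcnt ν a b T i + fbcnt ν a b T i := by omega
        rw [if_neg c2]
    · rw [bk_free hfj, bk_unfree hfj']
      have h1 := (free_iff hν hab hT i j).mp hfj
      have h4 : ¬ (xcnt ν a b T i ≤ (j' : ℕ) ∧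
          (j' : ℕ) < xcnt ν a b T i + facnt ν a b T i + fbcnt ν a b T i) :=
        fun hc => hfj' ((free_iff hν hab hT i j').mpr hc)
      have hhigh : xcnt ν a b T i + facnt ν a b T i + fbcnt ν a b T i ≤ (j' : ℕ) := by omega
      have hv := (range_high hν hab hT hhigh).2
      split_ifs with c1 <;> exact Fin.le_def.mpr (by omega)
  · by_cases hfj' : FA ν a b T i j' ∨ FB ν a b T i j'
    · rw [bk_unfree hfj, bk_free hfj']
      have h2 := (free_iff hν hab hT i j').mp hfj'
      have h3 : ¬ (xcnt ν a b T i ≤ (j : ℕ) ∧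
          (j : ℕ) < xcnt ν a b T i + facnt ν a b T i + fbcnt ν a b T i) :=
        fun hc => hfj ((free_iff hν hab hT i j).mpr hc)
      have hlow : (j : ℕ) < xcnt ν a b T i := by omega
      have hv := (range_low hν hab hT hlow).2
      split_ifs with c1 <;> exact Fin.le_def.mpr (by omega)
    · rw [bk_unfree hfj, bk_unfree hfj']
      exact hT.1 i j j' hle

lemma bk_col_adj (hν : ∀ i j : Fin m, i ≤ j → ν j ≤ ν i) (hab : (b : ℕ) = (a : ℕ) + 1)
    (hT : IsSSYT ν T) (i : Fin m) (h1 : (i : ℕ) + 1 < m) (jv : ℕ)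
    (hj2 : jv < ν ⟨(i : ℕ) + 1, h1⟩) (hj1 : jv < ν i) :
    bk ν a b T i ⟨jv, hj1⟩ < bk ν a b T ⟨(i : ℕ) + 1, h1⟩ ⟨jv, hj2⟩ := by
  have hcol : T i ⟨jv, hj1⟩ < T ⟨(i : ℕ)+1, h1⟩ ⟨jv, hj2⟩ :=
    hT.2 i ⟨(i : ℕ)+1, h1⟩ (Fin.lt_def.mpr (Nat.lt_succ_self _)) ⟨jv, hj2⟩ hj1
  have ecol := Fin.lt_def.mp hcol
  by_cases hfc1 : FA ν a b T i ⟨jv, hj1⟩ ∨ FB ν a b T i ⟨jv, hj1⟩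
  · by_cases hfc2 : FA ν a b T ⟨(i : ℕ)+1, h1⟩ ⟨jv, hj2⟩ ∨ FB ν a b T ⟨(i : ℕ)+1, h1⟩ ⟨jv, hj2⟩
    · exfalso
      have hv1 : (T i ⟨jv, hj1⟩ : ℕ) = (a : ℕ) ∨ (T i ⟨jv, hj1⟩ : ℕ) = (b : ℕ) := by
        rcases hfc1 with h | h
        · exact Or.inl (congrArg Fin.val h.1)
        · exact Or.inr (congrArg Fin.val h.1)
      have hv2 : (T ⟨(i : ℕ)+1, h1⟩ ⟨jv, hj2⟩ : ℕ) = (a : ℕ) ∨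
          (T ⟨(i : ℕ)+1, h1⟩ ⟨jv, hj2⟩ : ℕ) = (b : ℕ) := by
        rcases hfc2 with h | h
        · exact Or.inl (congrArg Fin.val h.1)
        · exact Or.inr (congrArg Fin.val h.1)
      have hva : T i ⟨jv, hj1⟩ = a := Fin.ext (by omega)
      have hvb : T ⟨(i : ℕ)+1, h1⟩ ⟨jv, hj2⟩ = b := Fin.ext (by omega)
      rcases hfc1 with hFA | hFB
      · exact hFA.2 ⟨h1, hj2, hvb⟩
      · have e1 := congrArg Fin.val hFB.1
        have e2 := congrArg Fin.val hva
        omega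
    · rw [bk_free hfc1, bk_unfree hfc2]
      have hgt : (b : ℕ) < (T ⟨(i : ℕ)+1, h1⟩ ⟨jv, hj2⟩ : ℕ) := by
        rcases hfc1 with hFA | hFB
        · exact below_of_FA hT hab hFA h1 hj2
        · have := congrArg Fin.val hFB.1; omega
      split_ifs with c <;> exact Fin.lt_def.mpr (by omega)
  · by_cases hfc2 : FA ν a b T ⟨(i : ℕ)+1, h1⟩ ⟨jv, hj2⟩ ∨ FB ν a b T ⟨(i : ℕ)+1, h1⟩ ⟨jv, hj2⟩
    · rw [bk_unfree hfc1, bk_free hfc2]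
      have hlt : (T i ⟨jv, hj1⟩ : ℕ) < (a : ℕ) := by
        rcases hfc2 with hFA | hFB
        · have := congrArg Fin.val hFA.1; omega
        · have hne : (T i ⟨jv, hj1⟩ : ℕ) ≠ (a : ℕ) := by
            intro hc
            exact hFB.2 ⟨Nat.succ_pos _, hj1, Fin.ext hc⟩
          have := congrArg Fin.val hFB.1
          omega
      split_ifs with c <;> exact Fin.lt_def.mpr (by omega)
    · rw [bk_unfree hfc1, bk_unfree hfc2]
      exact hcol

lemma col_all (S : Tab m ν N) (hν : ∀ i j : Fin m, i ≤ j → ν j ≤ ν i)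
    (hadj : ∀ (i : Fin m) (h1 : (i : ℕ) + 1 < m) (jv : ℕ)
      (hj2 : jv < ν ⟨(i : ℕ) + 1, h1⟩) (hj1 : jv < ν i),
      S i ⟨jv, hj1⟩ < S ⟨(i : ℕ) + 1, h1⟩ ⟨jv, hj2⟩) :
    ∀ (i i' : Fin m), i < i' → ∀ (j : Fin (ν i')) (hj : (j : ℕ) < ν i),
      S i ⟨(j : ℕ), hj⟩ < S i' j := by
  have key : ∀ d ti ti' : ℕ, ∀ (hti : ti < m) (hti' : ti' < m), ti' = ti + d + 1 →
      ∀ (jv : ℕ) (hj' : jv < ν ⟨ti', hti'⟩) (hj : jv < ν ⟨ti, hti⟩),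
      S ⟨ti, hti⟩ ⟨jv, hj⟩ < S ⟨ti', hti'⟩ ⟨jv, hj'⟩ := by
    intro d
    induction d with
    | zero =>
      intro ti ti' hti hti' he jv hj' hj
      subst he
      exact hadj ⟨ti, hti⟩ hti' jv hj' hj
    | succ d ih =>
      intro ti ti' hti hti' he jv hj' hj
      subst he
      have hmid : ti + d + 1 < m := by omega
      have hjm : jv < ν ⟨ti + d + 1, hmid⟩ :=
        lt_of_lt_of_le hj' (hν ⟨ti + d + 1, hmid⟩ ⟨ti + (d+1) + 1, hti'⟩
          (Fin.mk_le_mk.mpr (by omega)))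
      exact lt_trans (ih ti (ti + d + 1) hti hmid rfl jv hjm hj)
        (hadj ⟨ti + d + 1, hmid⟩ hti' jv hj' hjm)
  intro i i' hlt j hj
  exact key ((i' : ℕ) - (i : ℕ) - 1) (i : ℕ) (i' : ℕ) i.isLt i'.isLt
    (by have := Fin.lt_def.mp hlt; omega) (j : ℕ) j.isLt hj

lemma bk_ssyt (hν : ∀ i j : Fin m, i ≤ j → ν j ≤ ν i) (hab : (b : ℕ) = (a : ℕ) + 1)
    (hT : IsSSYT ν T) : IsSSYT ν (bk ν a b T) :=
  ⟨bk_row_mono hν hab hT,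
    col_all (bk ν a b T) hν (fun i h1 jv hj2 hj1 => bk_col_adj hν hab hT i h1 jv hj2 hj1)⟩

end BKmain


section BKinv

variable {m N : ℕ} {ν : Fin m → ℕ} {a b : Fin N} {T : Tab m ν N}

lemma tab_cast {S : Tab m ν N} {i i' : Fin m} (h : i = i') {jv : ℕ} (hj : jv < ν i)
    (hj' : jv < ν i') : S i ⟨jv, hj⟩ = S i' ⟨jv, hj'⟩ := by subst h; rfl

lemma locked_b_below {i : Fin m} {j : Fin (ν i)} (hval : T i j = b) (h1 : 0 < (i : ℕ))
    (hprev : (i : ℕ) - 1 < m) : belowB ν b T ⟨(i : ℕ) - 1, hprev⟩ (j : ℕ) := by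
  have h1' : ((i : ℕ) - 1) + 1 < m := by have := i.isLt; omega
  have hieq : (⟨((i : ℕ) - 1) + 1, h1'⟩ : Fin m) = i := Fin.ext (Nat.succ_pred_eq_of_pos h1)
  have h2' : (j : ℕ) < ν ⟨((i : ℕ) - 1) + 1, h1'⟩ := by rw [hieq]; exact j.isLt
  exact ⟨h1', h2', (tab_cast hieq h2' j.isLt).trans hval⟩

lemma bk_below_locked (hab : (b : ℕ) = (a : ℕ) + 1) {i : Fin m} {j : Fin (ν i)}
    (hval : T i j = a) (hbel : belowB ν b T i (j : ℕ)) :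
    belowB ν b (bk ν a b T) i (j : ℕ) := by
  obtain ⟨h1, h2, heq⟩ := hbel
  refine ⟨h1, h2, ?_⟩
  have hnfa : ¬ FA ν a b T ⟨(i : ℕ)+1, h1⟩ ⟨(j : ℕ), h2⟩ := by
    intro hc
    have e1 := congrArg Fin.val hc.1
    have e2 := congrArg Fin.val heq
    omega
  have hnfb : ¬ FB ν a b T ⟨(i : ℕ)+1, h1⟩ ⟨(j : ℕ), h2⟩ := by
    intro hc
    exact hc.2 ⟨Nat.succ_pos _, j.isLt, hval⟩
  exact (bk_unfree (fun hc => hc.elim hnfa hnfb)).trans heq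

lemma bk_above_locked (hab : (b : ℕ) = (a : ℕ) + 1) {i : Fin m} {j : Fin (ν i)}
    (hval : T i j = b) (habv : aboveA ν a T i (j : ℕ)) :
    aboveA ν a (bk ν a b T) i (j : ℕ) := by
  obtain ⟨h1, h2, heq⟩ := habv
  refine ⟨h1, h2, ?_⟩
  have hprev : (i : ℕ) - 1 < m := by have := i.isLt; omega
  have hbelprev : belowB ν b T ⟨(i : ℕ) - 1, hprev⟩ (j : ℕ) := locked_b_below hval h1 hprev
  have hnfa : ¬ FA ν a b T ⟨(i : ℕ) - 1, hprev⟩ ⟨(j : ℕ), h2⟩ := fun hc => hc.2 hbelprev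
  have hnfb : ¬ FB ν a b T ⟨(i : ℕ) - 1, hprev⟩ ⟨(j : ℕ), h2⟩ := by
    intro hc
    have e1 := congrArg Fin.val hc.1
    have e2 := congrArg Fin.val heq
    omega
  exact (bk_unfree (fun hc => hc.elim hnfa hnfb)).trans heq

lemma unfree_bk_of_unfree (hab : (b : ℕ) = (a : ℕ) + 1) {i : Fin m} {j : Fin (ν i)}
    (h : ¬ (FA ν a b T i j ∨ FB ν a b T i j)) :
    ¬ (FA ν a b (bk ν a b T) i j ∨ FB ν a b (bk ν a b T) i j) ∧
      bk ν a b T i j = T i j := by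
  have heqT : bk ν a b T i j = T i j := bk_unfree h
  refine ⟨?_, heqT⟩
  have hnfa : ¬ FA ν a b T i j := fun hc => h (Or.inl hc)
  have hnfb : ¬ FB ν a b T i j := fun hc => h (Or.inr hc)
  by_cases hva : T i j = a
  · have hbel : belowB ν b T i (j : ℕ) := by
      by_contra hc; exact hnfa ⟨hva, hc⟩
    have hbel' := bk_below_locked hab hva hbel
    rintro (hc | hc)
    · exact hc.2 hbel'
    · have e1 := congrArg Fin.val hc.1
      have e2 := congrArg Fin.val heqT
      have e3 := congrArg Fin.val hva
      omega
  · by_cases hvb : T i j = b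
    · have habv : aboveA ν a T i (j : ℕ) := by
        by_contra hc; exact hnfb ⟨hvb, hc⟩
      have habv' := bk_above_locked hab hvb habv
      rintro (hc | hc)
      · have e1 := congrArg Fin.val hc.1
        have e2 := congrArg Fin.val heqT
        have e3 := congrArg Fin.val hvb
        omega
      · exact hc.2 habv'
    · have hva' : (T i j : ℕ) ≠ (a : ℕ) := fun hc => hva (Fin.ext hc)
      have hvb' : (T i j : ℕ) ≠ (b : ℕ) := fun hc => hvb (Fin.ext hc)
      rintro (hc | hc)
      · have e1 := congrArg Fin.val hc.1
        have e2 := congrArg Fin.val heqT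
        omega
      · have e1 := congrArg Fin.val hc.1
        have e2 := congrArg Fin.val heqT
        omega

lemma FAbk_iff (hν : ∀ i j : Fin m, i ≤ j → ν j ≤ ν i) (hab : (b : ℕ) = (a : ℕ) + 1)
    (hT : IsSSYT ν T) {i : Fin m} (j : Fin (ν i)) :
    FA ν a b (bk ν a b T) i j ↔
      ((FA ν a b T i j ∨ FB ν a b T i j) ∧
        (j : ℕ) < xcnt ν a b T i + fbcnt ν a b T i) := by
  constructor
  · rintro ⟨hval, hnb⟩
    by_cases hfree : FA ν a b T i j ∨ FB ν a b T i j
    · refine ⟨hfree, ?_⟩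
      by_contra hc
      rw [bk_free hfree, if_neg hc] at hval
      have := congrArg Fin.val hval
      omega
    · exact absurd (Or.inl ⟨hval, hnb⟩) (unfree_bk_of_unfree hab hfree).1
  · rintro ⟨hfree, hlt⟩
    refine ⟨by rw [bk_free hfree, if_pos hlt], ?_⟩
    rcases hfree with hFA | hFB
    · rintro ⟨h1, h2, heq⟩
      have hgt := below_of_FA hT hab hFA h1 h2
      have hnf : ¬ (FA ν a b T ⟨(i : ℕ)+1, h1⟩ ⟨(j : ℕ), h2⟩ ∨
          FB ν a b T ⟨(i : ℕ)+1, h1⟩ ⟨(j : ℕ), h2⟩) := by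
        rintro (hc | hc) <;> · have := congrArg Fin.val hc.1; omega
      have hTb := (bk_unfree hnf).symm.trans heq
      have := congrArg Fin.val hTb
      omega
    · rintro ⟨h1, h2, heq⟩
      have hcol : T i j < T ⟨(i : ℕ)+1, h1⟩ ⟨(j : ℕ), h2⟩ :=
        hT.2 i _ (Fin.lt_def.mpr (Nat.lt_succ_self _)) ⟨(j : ℕ), h2⟩ j.isLt
      have e0 := congrArg Fin.val hFB.1
      have e1 := Fin.lt_def.mp hcol
      have hnf : ¬ (FA ν a b T ⟨(i : ℕ)+1, h1⟩ ⟨(j : ℕ), h2⟩ ∨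
          FB ν a b T ⟨(i : ℕ)+1, h1⟩ ⟨(j : ℕ), h2⟩) := by
        rintro (hc | hc) <;> · have := congrArg Fin.val hc.1; omega
      have hTb := (bk_unfree hnf).symm.trans heq
      have := congrArg Fin.val hTb
      omega

lemma FBbk_iff (hν : ∀ i j : Fin m, i ≤ j → ν j ≤ ν i) (hab : (b : ℕ) = (a : ℕ) + 1)
    (hT : IsSSYT ν T) {i : Fin m} (j : Fin (ν i)) :
    FB ν a b (bk ν a b T) i j ↔
      ((FA ν a b T i j ∨ FB ν a b T i j) ∧
        ¬ ((j : ℕ) < xcnt ν a b T i + fbcnt ν a b T i)) := by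
  constructor
  · rintro ⟨hval, hna⟩
    by_cases hfree : FA ν a b T i j ∨ FB ν a b T i j
    · refine ⟨hfree, ?_⟩
      intro hc
      rw [bk_free hfree, if_pos hc] at hval
      have := congrArg Fin.val hval
      omega
    · exact absurd (Or.inr ⟨hval, hna⟩) (unfree_bk_of_unfree hab hfree).1
  · rintro ⟨hfree, hge⟩
    refine ⟨by rw [bk_free hfree, if_neg hge], ?_⟩
    rcases hfree with hFA | hFB
    · rintro ⟨h1, h2, heq⟩
      have hprev : (i : ℕ) - 1 < m := by have := i.isLt; omega
      have hlt : T ⟨(i : ℕ)-1, hprev⟩ ⟨(j : ℕ), h2⟩ < T i j :=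
        hT.2 _ i (Fin.lt_def.mpr (Nat.sub_lt h1 one_pos)) j h2
      have e0 := congrArg Fin.val hFA.1
      have e1 := Fin.lt_def.mp hlt
      have hnf : ¬ (FA ν a b T ⟨(i : ℕ)-1, hprev⟩ ⟨(j : ℕ), h2⟩ ∨
          FB ν a b T ⟨(i : ℕ)-1, hprev⟩ ⟨(j : ℕ), h2⟩) := by
        rintro (hc | hc) <;> · have := congrArg Fin.val hc.1; omega
      have hTa := (bk_unfree hnf).symm.trans heq
      have := congrArg Fin.val hTa
      omega
    · rintro ⟨h1, h2, heq⟩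
      have hprev : (i : ℕ) - 1 < m := by have := i.isLt; omega
      have hlt := above_of_FB hT hab hFB h1 hprev h2
      have hnf : ¬ (FA ν a b T ⟨(i : ℕ)-1, hprev⟩ ⟨(j : ℕ), h2⟩ ∨
          FB ν a b T ⟨(i : ℕ)-1, hprev⟩ ⟨(j : ℕ), h2⟩) := by
        rintro (hc | hc) <;> · have := congrArg Fin.val hc.1; omega
      have hTa := (bk_unfree hnf).symm.trans heq
      have := congrArg Fin.val hTa
      omega

open Classical in
lemma xcnt_bk (hν : ∀ i j : Fin m, i ≤ j → ν j ≤ ν i) (hab : (b : ℕ) = (a : ℕ) + 1)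
    (hT : IsSSYT ν T) (i : Fin m) : xcnt ν a b (bk ν a b T) i = xcnt ν a b T i := by
  unfold xcnt
  refine congrArg Finset.card (Finset.filter_congr ?_)
  intro j _
  by_cases hfree : FA ν a b T i j ∨ FB ν a b T i j
  · constructor
    · rintro (h | ⟨h1, h2⟩)
      · exfalso
        rw [bk_free hfree] at h
        have := Fin.lt_def.mp h
        split_ifs at this <;> omega
      · exfalso
        rw [bk_free hfree] at h1
        by_cases hc : (j : ℕ) < xcnt ν a b T i + fbcnt ν a b T i
        · have hFAbk : FA ν a b (bk ν a b T) i j := (FAbk_iff hν hab hT j).mpr ⟨hfree, hc⟩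
          exact hFAbk.2 h2
        · rw [if_neg hc] at h1
          have := congrArg Fin.val h1
          omega
    · rintro (h | ⟨h1, h2⟩)
      · exfalso
        rcases hfree with hc | hc
        · have e1 := congrArg Fin.val hc.1
          have := Fin.lt_def.mp h
          omega
        · have e1 := congrArg Fin.val hc.1
          have := Fin.lt_def.mp h
          omega
      · exfalso
        rcases hfree with hc | hc
        · exact hc.2 h2
        · have e1 := congrArg Fin.val hc.1
          have e2 := congrArg Fin.val h1
          omega
  · have heqT : bk ν a b T i j = T i j := bk_unfree hfree
    constructor
    · rintro (h | ⟨h1, h2⟩)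
      · exact Or.inl (by rw [← heqT]; exact h)
      · have hTa : T i j = a := heqT.symm.trans h1
        right
        refine ⟨hTa, ?_⟩
        by_contra hc
        exact hfree (Or.inl ⟨hTa, hc⟩)
    · rintro (h | ⟨h1, h2⟩)
      · exact Or.inl (by rw [heqT]; exact h)
      · exact Or.inr ⟨heqT.trans h1, bk_below_locked hab h1 h2⟩

open Classical in
lemma fbcnt_bk (hν : ∀ i j : Fin m, i ≤ j → ν j ≤ ν i) (hab : (b : ℕ) = (a : ℕ) + 1)
    (hT : IsSSYT ν T) (i : Fin m) : fbcnt ν a b (bk ν a b T) i = facnt ν a b T i := by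
  have h1 : (Finset.univ.filter (fun j : Fin (ν i) => FB ν a b (bk ν a b T) i j)) =
      (Finset.univ.filter (fun j : Fin (ν i) =>
        (FA ν a b T i j ∨ FB ν a b T i j) ∧
          ¬ ((j : ℕ) < xcnt ν a b T i + fbcnt ν a b T i))) :=
    Finset.filter_congr (fun j _ => FBbk_iff hν hab hT j)
  unfold fbcnt
  rw [h1]
  exact card_free_ge hν hab hT i

lemma bk_bk (hν : ∀ i j : Fin m, i ≤ j → ν j ≤ ν i) (hab : (b : ℕ) = (a : ℕ) + 1)
    (hT : IsSSYT ν T) : bk ν a b (bk ν a b T) = T := by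
  funext i j
  by_cases hfree : FA ν a b T i j ∨ FB ν a b T i j
  · have hfree' : FA ν a b (bk ν a b T) i j ∨ FB ν a b (bk ν a b T) i j := by
      by_cases hc : (j : ℕ) < xcnt ν a b T i + fbcnt ν a b T i
      · exact Or.inl ((FAbk_iff hν hab hT j).mpr ⟨hfree, hc⟩)
      · exact Or.inr ((FBbk_iff hν hab hT j).mpr ⟨hfree, hc⟩)
    rw [bk_free hfree', xcnt_bk hν hab hT, fbcnt_bk hν hab hT]
    rcases hfree with hFA | hFB
    · rw [if_pos ((freeA_iff hab hT i j).mp hFA).2]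
      exact hFA.1.symm
    · rw [if_neg (by have := (freeB_iff hν hab hT i j).mp hFB; omega)]
      exact hFB.1.symm
  · have h2 := unfree_bk_of_unfree hab hfree
    rw [bk_unfree h2.1, h2.2]

end BKinv


section BKcount

variable {m N : ℕ} {ν : Fin m → ℕ} {a b : Fin N} {T : Tab m ν N}

open Classical in
lemma row_lacnt_shift (hν : ∀ i j : Fin m, i ≤ j → ν j ≤ ν i) (i : Fin m) :
    lacnt ν a b T i =
      (if h : (i : ℕ) + 1 < m then lbcnt ν a b T ⟨(i : ℕ) + 1, h⟩ else 0) := by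
  split_ifs with h
  · unfold lacnt lbcnt
    refine Finset.card_bij
      (fun (j : Fin (ν i)) (hj : j ∈ _) =>
        (⟨(j : ℕ), by
          obtain ⟨h1, h2, _⟩ := (Finset.mem_filter.mp hj).2.2
          exact h2⟩ : Fin (ν ⟨(i : ℕ) + 1, h⟩))) ?_ ?_ ?_
    · intro j hj
      obtain ⟨-, hval, hbel⟩ := Finset.mem_filter.mp hj
      obtain ⟨h1, h2, heq⟩ := hbel
      refine Finset.mem_filter.mpr ⟨Finset.mem_univ _, ?_, ?_⟩
      · exact heq
      · exact ⟨Nat.succ_pos _, j.isLt, hval⟩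
    · intro j1 h1 j2 h2 heq
      have hv := congrArg Fin.val heq
      exact Fin.ext (by exact hv)
    · intro j' hj'
      obtain ⟨-, hval, habv⟩ := Finset.mem_filter.mp hj'
      obtain ⟨h1', h2', heq'⟩ := habv
      refine ⟨⟨(j' : ℕ), h2'⟩, Finset.mem_filter.mpr ⟨Finset.mem_univ _, ?_, ?_⟩, ?_⟩
      · exact heq'
      · exact ⟨h, j'.isLt, hval⟩
      · exact Fin.ext rfl
  · unfold lacnt
    rw [Finset.card_eq_zero, Finset.filter_eq_empty_iff]
    intro j _
    rintro ⟨-, hbel⟩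
    obtain ⟨h1, -, -⟩ := hbel
    exact h h1

open Classical in
lemma lbcnt_zero (h0 : 0 < m) : lbcnt ν a b T ⟨0, h0⟩ = 0 := by
  unfold lbcnt
  rw [Finset.card_eq_zero, Finset.filter_eq_empty_iff]
  intro j _
  rintro ⟨-, habv⟩
  obtain ⟨hpos, -, -⟩ := habv
  exact Nat.lt_irrefl 0 hpos

open Classical in
lemma sum_lacnt_eq_sum_lbcnt (hν : ∀ i j : Fin m, i ≤ j → ν j ≤ ν i) :
    ∑ i : Fin m, lacnt ν a b T i = ∑ i : Fin m, lbcnt ν a b T i := by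
  set L : ℕ → ℕ := fun t => if h : t < m then lbcnt ν a b T ⟨t, h⟩ else 0 with hL
  have h1 : ∀ i : Fin m, lacnt ν a b T i = L ((i : ℕ) + 1) := fun i =>
    row_lacnt_shift hν i
  have h2 : ∀ i : Fin m, lbcnt ν a b T i = L (i : ℕ) := by
    intro i
    rw [hL]
    simp only [i.isLt, dif_pos]
  have e1 := Finset.sum_range_succ' L m
  have e2 := Finset.sum_range_succ L m
  have hL0 : L 0 = 0 := by
    by_cases h : 0 < m
    · have he : L 0 = lbcnt ν a b T ⟨0, h⟩ := dif_pos h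
      rw [he, lbcnt_zero]
    · exact dif_neg h
  have hLm : L m = 0 := dif_neg (lt_irrefl m)
  calc ∑ i : Fin m, lacnt ν a b T i = ∑ i : Fin m, L ((i : ℕ) + 1) :=
        Finset.sum_congr rfl (fun i _ => h1 i)
    _ = ∑ t ∈ Finset.range m, L (t + 1) :=
        Fin.sum_univ_eq_sum_range (fun t => L (t + 1)) m
    _ = ∑ t ∈ Finset.range m, L t := by omega
    _ = ∑ i : Fin m, L (i : ℕ) := (Fin.sum_univ_eq_sum_range L m).symm
    _ = ∑ i : Fin m, lbcnt ν a b T i := Finset.sum_congr rfl (fun i _ => (h2 i).symm)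

open Classical in
lemma row_count_bk_a (hν : ∀ i j : Fin m, i ≤ j → ν j ≤ ν i) (hab : (b : ℕ) = (a : ℕ) + 1)
    (hT : IsSSYT ν T) (i : Fin m) :
    (Finset.univ.filter (fun j : Fin (ν i) => bk ν a b T i j = a)).card =
      lacnt ν a b T i + fbcnt ν a b T i := by
  have hsplit : (Finset.univ.filter (fun j : Fin (ν i) => bk ν a b T i j = a)) =
      (Finset.univ.filter (fun j : Fin (ν i) => T i j = a ∧ belowB ν b T i (j : ℕ))) ∪
      (Finset.univ.filter (fun j : Fin (ν i) =>
        (FA ν a b T i j ∨ FB ν a b T i j) ∧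
          (j : ℕ) < xcnt ν a b T i + fbcnt ν a b T i)) := by
    ext j
    simp only [Finset.mem_filter, Finset.mem_union, Finset.mem_univ, true_and]
    constructor
    · intro hval
      by_cases hfree : FA ν a b T i j ∨ FB ν a b T i j
      · right
        refine ⟨hfree, ?_⟩
        by_contra hc
        rw [bk_free hfree, if_neg hc] at hval
        have := congrArg Fin.val hval
        omega
      · left
        have heqT := bk_unfree hfree
        have hTa : T i j = a := heqT.symm.trans hval
        refine ⟨hTa, ?_⟩
        by_contra hc
        exact hfree (Or.inl ⟨hTa, hc⟩)
    · rintro (⟨hval, hbel⟩ | ⟨hfree, hlt⟩)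
      · have hnf : ¬ (FA ν a b T i j ∨ FB ν a b T i j) := by
          rintro (hc | hc)
          · exact hc.2 hbel
          · have e1 := congrArg Fin.val hc.1
            have e2 := congrArg Fin.val hval
            omega
        exact (bk_unfree hnf).trans hval
      · rw [bk_free hfree, if_pos hlt]
  rw [hsplit, Finset.card_union_of_disjoint, card_free_lt hν hab hT i]
  · rfl
  · rw [Finset.disjoint_left]
    intro j hj1 hj2
    rw [Finset.mem_filter] at hj1 hj2
    rcases hj2.2.1 with hc | hc
    · exact hc.2 hj1.2.2
    · have e1 := congrArg Fin.val hc.1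
      have e2 := congrArg Fin.val hj1.2.1
      omega

open Classical in
lemma row_count_bk_b (hν : ∀ i j : Fin m, i ≤ j → ν j ≤ ν i) (hab : (b : ℕ) = (a : ℕ) + 1)
    (hT : IsSSYT ν T) (i : Fin m) :
    (Finset.univ.filter (fun j : Fin (ν i) => bk ν a b T i j = b)).card =
      lbcnt ν a b T i + facnt ν a b T i := by
  have hsplit : (Finset.univ.filter (fun j : Fin (ν i) => bk ν a b T i j = b)) =
      (Finset.univ.filter (fun j : Fin (ν i) => T i j = b ∧ aboveA ν a T i (j : ℕ))) ∪
      (Finset.univ.filter (fun j : Fin (ν i) =>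
        (FA ν a b T i j ∨ FB ν a b T i j) ∧
          ¬ ((j : ℕ) < xcnt ν a b T i + fbcnt ν a b T i))) := by
    ext j
    simp only [Finset.mem_filter, Finset.mem_union, Finset.mem_univ, true_and]
    constructor
    · intro hval
      by_cases hfree : FA ν a b T i j ∨ FB ν a b T i j
      · right
        refine ⟨hfree, ?_⟩
        intro hc
        rw [bk_free hfree, if_pos hc] at hval
        have := congrArg Fin.val hval
        omega
      · left
        have heqT := bk_unfree hfree
        have hTb : T i j = b := heqT.symm.trans hval
        refine ⟨hTb, ?_⟩
        by_contra hc
        exact hfree (Or.inr ⟨hTb, hc⟩)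
    · rintro (⟨hval, habv⟩ | ⟨hfree, hge⟩)
      · have hnf : ¬ (FA ν a b T i j ∨ FB ν a b T i j) := by
          rintro (hc | hc)
          · have e1 := congrArg Fin.val hc.1
            have e2 := congrArg Fin.val hval
            omega
          · exact hc.2 habv
        exact (bk_unfree hnf).trans hval
      · rw [bk_free hfree, if_neg hge]
  rw [hsplit, Finset.card_union_of_disjoint, card_free_ge hν hab hT i]
  · rfl
  · rw [Finset.disjoint_left]
    intro j hj1 hj2
    rw [Finset.mem_filter] at hj1 hj2
    rcases hj2.2.1 with hc | hc
    · have e1 := congrArg Fin.val hc.1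
      have e2 := congrArg Fin.val hj1.2.1
      omega
    · exact hc.2 hj1.2.2

open Classical in
lemma row_count_T_a (i : Fin m) :
    (Finset.univ.filter (fun j : Fin (ν i) => T i j = a)).card =
      lacnt ν a b T i + facnt ν a b T i := by
  have hsplit : (Finset.univ.filter (fun j : Fin (ν i) => T i j = a)) =
      (Finset.univ.filter (fun j : Fin (ν i) => T i j = a ∧ belowB ν b T i (j : ℕ))) ∪
      (Finset.univ.filter (fun j : Fin (ν i) => FA ν a b T i j)) := by
    ext j
    simp only [Finset.mem_filter, Finset.mem_univ, Finset.mem_union, true_and]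
    constructor
    · intro hval
      by_cases hbel : belowB ν b T i (j : ℕ)
      · exact Or.inl ⟨hval, hbel⟩
      · exact Or.inr ⟨hval, hbel⟩
    · rintro (⟨hval, -⟩ | ⟨hval, -⟩) <;> exact hval
  rw [hsplit, Finset.card_union_of_disjoint]
  · rfl
  · rw [Finset.disjoint_left]
    intro j hj1 hj2
    rw [Finset.mem_filter] at hj1 hj2
    exact hj2.2.2 hj1.2.2

open Classical in
lemma row_count_T_b (i : Fin m) :
    (Finset.univ.filter (fun j : Fin (ν i) => T i j = b)).card =
      lbcnt ν a b T i + fbcnt ν a b T i := by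
  have hsplit : (Finset.univ.filter (fun j : Fin (ν i) => T i j = b)) =
      (Finset.univ.filter (fun j : Fin (ν i) => T i j = b ∧ aboveA ν a T i (j : ℕ))) ∪
      (Finset.univ.filter (fun j : Fin (ν i) => FB ν a b T i j)) := by
    ext j
    simp only [Finset.mem_filter, Finset.mem_univ, Finset.mem_union, true_and]
    constructor
    · intro hval
      by_cases habv : aboveA ν a T i (j : ℕ)
      · exact Or.inl ⟨hval, habv⟩
      · exact Or.inr ⟨hval, habv⟩
    · rintro (⟨hval, -⟩ | ⟨hval, -⟩) <;> exact hval
  rw [hsplit, Finset.card_union_of_disjoint]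
  · rfl
  · rw [Finset.disjoint_left]
    intro j hj1 hj2
    rw [Finset.mem_filter] at hj1 hj2
    exact hj2.2.2 hj1.2.2

open Classical in
lemma tabCount_filter (S : Tab m ν N) (v : Fin N) :
    tabCount ν S v = ∑ i : Fin m,
      (Finset.univ.filter (fun j : Fin (ν i) => S i j = v)).card := by
  unfold tabCount
  refine Finset.sum_congr rfl (fun i _ => ?_)
  congr 1

open Classical in
lemma tabCount_bk (hν : ∀ i j : Fin m, i ≤ j → ν j ≤ ν i) (hab : (b : ℕ) = (a : ℕ) + 1)
    (hT : IsSSYT ν T) (v : Fin N) :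
    tabCount ν (bk ν a b T) v = tabCount ν T (Equiv.swap a b v) := by
  have hne : a ≠ b := by
    intro hc
    have := congrArg Fin.val hc
    omega
  by_cases hva : v = a
  · rw [hva, Equiv.swap_apply_left, tabCount_filter, tabCount_filter]
    calc ∑ i : Fin m, (Finset.univ.filter (fun j : Fin (ν i) => bk ν a b T i j = a)).card
        = ∑ i : Fin m, (lacnt ν a b T i + fbcnt ν a b T i) :=
          Finset.sum_congr rfl (fun i _ => row_count_bk_a hν hab hT i)
      _ = (∑ i : Fin m, lacnt ν a b T i) + ∑ i : Fin m, fbcnt ν a b T i :=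
          Finset.sum_add_distrib
      _ = (∑ i : Fin m, lbcnt ν a b T i) + ∑ i : Fin m, fbcnt ν a b T i := by
          rw [sum_lacnt_eq_sum_lbcnt hν]
      _ = ∑ i : Fin m, (lbcnt ν a b T i + fbcnt ν a b T i) :=
          Finset.sum_add_distrib.symm
      _ = ∑ i : Fin m, (Finset.univ.filter (fun j : Fin (ν i) => T i j = b)).card :=
          Finset.sum_congr rfl (fun i _ => (row_count_T_b i).symm)
  · by_cases hvb : v = b
    · rw [hvb, Equiv.swap_apply_right, tabCount_filter, tabCount_filter]
      calc ∑ i : Fin m, (Finset.univ.filter (fun j : Fin (ν i) => bk ν a b T i j = b)).card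
          = ∑ i : Fin m, (lbcnt ν a b T i + facnt ν a b T i) :=
            Finset.sum_congr rfl (fun i _ => row_count_bk_b hν hab hT i)
        _ = (∑ i : Fin m, lbcnt ν a b T i) + ∑ i : Fin m, facnt ν a b T i :=
            Finset.sum_add_distrib
        _ = (∑ i : Fin m, lacnt ν a b T i) + ∑ i : Fin m, facnt ν a b T i := by
            rw [sum_lacnt_eq_sum_lbcnt hν]
        _ = ∑ i : Fin m, (lacnt ν a b T i + facnt ν a b T i) :=
            Finset.sum_add_distrib.symm
        _ = ∑ i : Fin m, (Finset.univ.filter (fun j : Fin (ν i) => T i j = a)).card :=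
            Finset.sum_congr rfl (fun i _ => (row_count_T_a i).symm)
    · rw [Equiv.swap_apply_of_ne_of_ne hva hvb, tabCount_filter, tabCount_filter]
      refine Finset.sum_congr rfl (fun i _ => ?_)
      refine congrArg Finset.card (Finset.filter_congr (fun j _ => ?_))
      by_cases hfree : FA ν a b T i j ∨ FB ν a b T i j
      · constructor
        · intro h
          exfalso
          rw [bk_free hfree] at h
          split_ifs at h
          · exact hva (h.symm)
          · exact hvb (h.symm)
        · intro h
          exfalso
          rcases hfree with hc | hc
          · exact hva (h.symm.trans hc.1)
          · exact hvb (h.symm.trans hc.1)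
      · rw [bk_unfree hfree]

end BKcount


section Assemble

lemma prod_tab {m N : ℕ} (ν : Fin m → ℕ) (T : Tab m ν N)
    (g : Fin N → MvPolynomial ℕ (Polynomial ℤ)) :
    (∏ i : Fin m, ∏ j : Fin (ν i), g (T i j)) =
      ∏ v : Fin N, g v ^ tabCount ν T v := by
  classical
  have hrow : ∀ i : Fin m, (∏ j : Fin (ν i), g (T i j)) =
      ∏ v : Fin N, g v ^ (Finset.univ.filter (fun j : Fin (ν i) => T i j = v)).card := by
    intro i
    rw [← Finset.prod_fiberwise_of_maps_to (g := fun j : Fin (ν i) => T i j)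
      (t := Finset.univ) (fun j _ => Finset.mem_univ _) (fun j => g (T i j))]
    refine Finset.prod_congr rfl (fun v _ => ?_)
    calc ∏ j ∈ Finset.univ.filter (fun j : Fin (ν i) => T i j = v), g (T i j)
        = ∏ _j ∈ Finset.univ.filter (fun j : Fin (ν i) => T i j = v), g v :=
          Finset.prod_congr rfl (fun j hj => by
            rw [(Finset.mem_filter.mp hj).2])
      _ = g v ^ (Finset.univ.filter (fun j : Fin (ν i) => T i j = v)).card :=
          Finset.prod_const _
  rw [Finset.prod_congr rfl (fun i (_ : i ∈ Finset.univ) => hrow i), Finset.prod_comm]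
  refine Finset.prod_congr rfl (fun v _ => ?_)
  rw [Finset.prod_pow_eq_pow_sum]
  congr 1

open Classical in
lemma bk_sum {m N : ℕ} (ν : Fin m → ℕ) (hν : ∀ i j : Fin m, i ≤ j → ν j ≤ ν i)
    (a b : Fin N) (hab : (b : ℕ) = (a : ℕ) + 1) (f : Fin N → ℕ) :
    (∑ T : Tab m ν N, if IsSSYT ν T then
        (∏ i : Fin m, ∏ j : Fin (ν i),
          (MvPolynomial.X (f (Equiv.swap a b (T i j))) : MvPolynomial ℕ (Polynomial ℤ)))
      else 0) =
      ∑ T : Tab m ν N, if IsSSYT ν T then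
        (∏ i : Fin m, ∏ j : Fin (ν i),
          (MvPolynomial.X (f (T i j)) : MvPolynomial ℕ (Polynomial ℤ))) else 0 := by
  rw [← Finset.sum_filter, ← Finset.sum_filter]
  refine Finset.sum_bij' (fun (T : Tab m ν N) _ => bk ν a b T)
    (fun (T : Tab m ν N) _ => bk ν a b T) ?_ ?_ ?_ ?_ ?_
  · intro T hT
    rw [Finset.mem_filter] at hT ⊢
    exact ⟨Finset.mem_univ _, bk_ssyt hν hab hT.2⟩
  · intro T hT
    rw [Finset.mem_filter] at hT ⊢
    exact ⟨Finset.mem_univ _, bk_ssyt hν hab hT.2⟩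
  · intro T hT
    rw [Finset.mem_filter] at hT
    exact bk_bk hν hab hT.2
  · intro T hT
    rw [Finset.mem_filter] at hT
    exact bk_bk hν hab hT.2
  · intro T hT
    rw [Finset.mem_filter] at hT
    have hTs := hT.2
    rw [prod_tab ν T (fun u => MvPolynomial.X (f (Equiv.swap a b u))),
      prod_tab ν (bk ν a b T) (fun u => MvPolynomial.X (f u))]
    have hcnt : ∀ v : Fin N, tabCount ν (bk ν a b T) v = tabCount ν T (Equiv.swap a b v) :=
      tabCount_bk hν hab hTs
    calc ∏ v : Fin N, MvPolynomial.X (f (Equiv.swap a b v)) ^ tabCount ν T v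
        = ∏ v : Fin N, MvPolynomial.X (f v) ^ tabCount ν T (Equiv.swap a b v) := by
          refine Fintype.prod_equiv (Equiv.swap a b)
            (fun v => (MvPolynomial.X (f (Equiv.swap a b v)) : MvPolynomial ℕ (Polynomial ℤ))
              ^ tabCount ν T v)
            (fun v => (MvPolynomial.X (f v) : MvPolynomial ℕ (Polynomial ℤ))
              ^ tabCount ν T (Equiv.swap a b v)) (fun v => ?_)
          simp only [Equiv.swap_apply_self]
      _ = ∏ v : Fin N, MvPolynomial.X (f v) ^ tabCount ν (bk ν a b T) v := by
          refine Finset.prod_congr rfl (fun v _ => ?_)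
          rw [hcnt v]

open Classical in
lemma perm_sum_invariant {n : ℕ} (lam : Fin n → ℕ)
    (hlam : ∀ i j : Fin n, i ≤ j → lam j ≤ lam i) (σ : Equiv.Perm (Fin n)) (f : Fin n → ℕ) :
    (∑ T : Tab n lam n, if IsSSYT lam T then
        (∏ i : Fin n, ∏ j : Fin (lam i),
          (MvPolynomial.X (f (σ (T i j))) : MvPolynomial ℕ (Polynomial ℤ))) else 0) =
      ∑ T : Tab n lam n, if IsSSYT lam T then
        (∏ i : Fin n, ∏ j : Fin (lam i),
          (MvPolynomial.X (f (T i j)) : MvPolynomial ℕ (Polynomial ℤ))) else 0 := by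
  by_cases hn : n = 0
  · subst hn
    refine Finset.sum_congr rfl (fun T _ => ?_)
    have h0 : ∀ g : Fin 0 → ℕ,
        (∏ i : Fin 0, ∏ j : Fin (lam i),
          (MvPolynomial.X (g (T i j)) : MvPolynomial ℕ (Polynomial ℤ))) = 1 := by
      intro g
      simp [Finset.univ_eq_empty]
    rw [show (∏ i : Fin 0, ∏ j : Fin (lam i),
        (MvPolynomial.X (f (σ (T i j))) : MvPolynomial ℕ (Polynomial ℤ))) = 1 from by
      simp [Finset.univ_eq_empty],
      show (∏ i : Fin 0, ∏ j : Fin (lam i),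
        (MvPolynomial.X (f (T i j)) : MvPolynomial ℕ (Polynomial ℤ))) = 1 from by
      simp [Finset.univ_eq_empty]]
  · obtain ⟨n', rfl⟩ : ∃ n', n = n' + 1 := ⟨n - 1, by omega⟩
    have hmem : σ ∈ Submonoid.closure
        (Set.range fun i : Fin n' => Equiv.swap i.castSucc i.succ) := by
      rw [Equiv.Perm.mclosure_swap_castSucc_succ n']
      trivial
    have key : ∀ τ ∈ Submonoid.closure
        (Set.range fun i : Fin n' => Equiv.swap i.castSucc i.succ),
        ∀ g : Fin (n'+1) → ℕ,
        (∑ T : Tab (n'+1) lam (n'+1), if IsSSYT lam T then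
            (∏ i, ∏ j, (MvPolynomial.X (g (τ (T i j))) : MvPolynomial ℕ (Polynomial ℤ)))
          else 0) =
          ∑ T : Tab (n'+1) lam (n'+1), if IsSSYT lam T then
            (∏ i, ∏ j, (MvPolynomial.X (g (T i j)) : MvPolynomial ℕ (Polynomial ℤ)))
          else 0 := by
      intro τ hτ
      induction hτ using Submonoid.closure_induction with
      | mem x hx =>
        obtain ⟨k, rfl⟩ := hx
        intro g
        exact bk_sum lam hlam k.castSucc k.succ (by simp) g
      | one =>
        intro g
        refine Finset.sum_congr rfl (fun T _ => ?_)
        simp only [Equiv.Perm.coe_one, id_eq]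
      | mul x y hx hy ihx ihy =>
        intro g
        have e1 : (∑ T : Tab (n'+1) lam (n'+1), if IsSSYT lam T then
            (∏ i, ∏ j, (MvPolynomial.X (g ((x * y) (T i j))) : MvPolynomial ℕ (Polynomial ℤ)))
          else 0) =
            ∑ T : Tab (n'+1) lam (n'+1), if IsSSYT lam T then
              (∏ i, ∏ j, (MvPolynomial.X ((fun v => g (x v)) (y (T i j))) :
                MvPolynomial ℕ (Polynomial ℤ))) else 0 := by
          refine Finset.sum_congr rfl (fun T _ => ?_)
          refine if_congr Iff.rfl ?_ rfl
          refine Finset.prod_congr rfl (fun i _ => Finset.prod_congr rfl (fun j _ => ?_))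
          rw [Equiv.Perm.mul_apply]
        rw [e1, ihy (fun v => g (x v)), ihx g]
    exact key σ hmem f

lemma revFin_invol {n : ℕ} : Function.Involutive (revFin (n := n)) := by
  intro k
  apply Fin.ext
  show n - 1 - (n - 1 - (k : ℕ)) = (k : ℕ)
  have := k.isLt
  omega

lemma revFin_le {n : ℕ} {u v : Fin n} : revFin u ≤ revFin v ↔ v ≤ u := by
  have hu := u.isLt
  have hv := v.isLt
  rw [Fin.le_def, Fin.le_def]
  show n - 1 - (u : ℕ) ≤ n - 1 - (v : ℕ) ↔ (v : ℕ) ≤ (u : ℕ)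
  omega

lemma revFin_lt {n : ℕ} {u v : Fin n} : revFin u < revFin v ↔ v < u := by
  have hu := u.isLt
  have hv := v.isLt
  rw [Fin.lt_def, Fin.lt_def]
  show n - 1 - (u : ℕ) < n - 1 - (v : ℕ) ↔ (v : ℕ) < (u : ℕ)
  omega

/-- Complementation of a filling. -/
def compl {n : ℕ} (lam : Fin n → ℕ) (G : Fill n lam) : Fill n lam :=
  fun i j => revFin (G i j)

lemma compl_compl {n : ℕ} (lam : Fin n → ℕ) (G : Fill n lam) :
    compl lam (compl lam G) = G :=
  funext fun i => funext fun j => revFin_invol (G i j)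

lemma ssyt_compl_iff {n : ℕ} (lam : Fin n → ℕ) (G : Fill n lam) :
    IsSSYT lam (compl lam G) ↔ RS lam G := by
  constructor
  · rintro ⟨h1, h2⟩
    refine ⟨fun i j j' hle => ?_, fun i i' hlt j hj => ?_⟩
    · exact revFin_le.mp (h1 i j j' hle)
    · exact revFin_lt.mp (h2 i i' hlt j hj)
  · rintro ⟨h1, h2⟩
    exact ⟨fun i j j' hle => revFin_le.mpr (h1 i j j' hle),
      fun i i' hlt j hj => revFin_lt.mpr (h2 i i' hlt j hj)⟩

end Assemble

open Classical in
/-- The key polynomial of a partition equals the Schur polynomial: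
`K_λ(x_1, …, x_n) = s_λ(x_1, …, x_n)`. -/
theorem key_polynomial_eq_schur (n : ℕ) (lam : Fin n → ℕ)
    (hlam : ∀ i j : Fin n, i ≤ j → lam j ≤ lam i) :
    (∑ G : Fill n lam,
      if CoinvFree lam (entry lam (keyBasement n) G) ∧
         maj lam (entry lam (keyBasement n) G) = 0 then xwt lam G else 0) =
    schurPoly n lam n := by
  classical
  have step1 : (∑ G : Fill n lam,
      if CoinvFree lam (entry lam (keyBasement n) G) ∧
         maj lam (entry lam (keyBasement n) G) = 0 then xwt lam G else 0) =
      ∑ G : Fill n lam, if RS lam G then xwt lam G else 0 :=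
    Finset.sum_congr rfl (fun G _ => if_congr (key_iff_RS lam hlam G) rfl rfl)
  rw [step1]
  have hbij : Function.Bijective (compl lam) :=
    Function.Involutive.bijective (compl_compl lam)
  have step2 : (∑ G : Fill n lam, if RS lam G then xwt lam G else 0) =
      ∑ T : Fill n lam, if IsSSYT lam T then
        (∏ i : Fin n, ∏ j : Fin (lam i),
          (MvPolynomial.X ((revFin (T i j) : ℕ) + 1) : MvPolynomial ℕ (Polynomial ℤ)))
      else 0 := by
    refine Fintype.sum_bijective (compl lam) hbij _ _ (fun G => ?_)
    have hval : (∏ i : Fin n, ∏ j : Fin (lam i),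
        (MvPolynomial.X ((revFin (compl lam G i j) : ℕ) + 1) :
          MvPolynomial ℕ (Polynomial ℤ))) = xwt lam G := by
      unfold xwt
      refine Finset.prod_congr rfl (fun i _ => Finset.prod_congr rfl (fun j _ => ?_))
      rw [show compl lam G i j = revFin (G i j) from rfl, revFin_invol (G i j)]
    exact (if_congr (ssyt_compl_iff lam G) hval rfl).symm
  rw [step2]
  have hperm : Function.Involutive (revFin (n := n)) := revFin_invol
  have step3 : (∑ T : Tab n lam n, if IsSSYT lam T then
      (∏ i : Fin n, ∏ j : Fin (lam i),
        (MvPolynomial.X ((revFin (T i j) : ℕ) + 1) : MvPolynomial ℕ (Polynomial ℤ)))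
      else 0) =
      ∑ T : Tab n lam n, if IsSSYT lam T then
        (∏ i : Fin n, ∏ j : Fin (lam i),
          (MvPolynomial.X ((T i j : ℕ) + 1) : MvPolynomial ℕ (Polynomial ℤ))) else 0 :=
    perm_sum_invariant lam hlam (Function.Involutive.toPerm revFin hperm)
      (fun v => (v : ℕ) + 1)
  rw [step3]
  rfl

end Paper
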